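/- arXiv:2311.12625 — 2 statements merged into one kernel-verified Lean document; each statement's English description precedes it below -/
import Mathlib

section
/- Adjointness of inclusion and restriction: for all f ∈ R_m and all g ∈ R_{m+1}, ⟨i(f), g⟩_{m+1} = ⟨f, r(g)⟩_m, where i: R_m → R_{m+1} is the natural inclusion and r: R_{m+1} → R_m is the restriction r(g) = g(x_1,…,x_m,0,x_{m+2},x_{m+3},…) followed by relabelling the variables (x_{m+2},x_{m+3},…) as (x_{m+1},x_{m+2},…). -/
open scoped BigOperators Classical

noncomputable section

/-- The field `K = ℚ(q,t)` of rational functions in two indeterminates. -/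
abbrev KK : Type := FractionRing (MvPolynomial (Fin 2) ℚ)

/-- The indeterminate `q`. -/
def qq : KK := algebraMap (MvPolynomial (Fin 2) ℚ) KK (MvPolynomial.X 0)

/-- The indeterminate `t`. -/
def tq : KK := algebraMap (MvPolynomial (Fin 2) ℚ) KK (MvPolynomial.X 1)

/-- Polynomials in `N` variables over `K`. -/
abbrev Pol (N : ℕ) : Type := MvPolynomial (Fin N) KK

namespace MSym

/-! ## Permutations, reduced words, Bruhat order -/

/-- The adjacent transposition `s_{i+1} = (i, i+1)` (0-indexed), junk `1` if out of range. -/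
def adj (n i : ℕ) : Equiv.Perm (Fin n) :=
  if h : i + 1 < n then Equiv.swap ⟨i, Nat.lt_of_succ_lt h⟩ ⟨i + 1, h⟩ else 1

/-- Number of inversions of a permutation (its Coxeter length). -/
def invCount {n : ℕ} (w : Equiv.Perm (Fin n)) : ℕ :=
  ((Finset.univ : Finset (Fin n × Fin n)).filter fun p => p.1 < p.2 ∧ w p.2 < w p.1).card

/-- `l` is a reduced word for `w` (letters are 0-indexed adjacent transpositions). -/
def ReducedWord {n : ℕ} (w : Equiv.Perm (Fin n)) (l : List ℕ) : Prop :=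
  (∀ i ∈ l, i + 1 < n) ∧ (l.map (adj n)).prod = w ∧ l.length = invCount w

/-- Strict Bruhat order on permutations: `u` is a proper subword of `v`. -/
def BruhatLT {n : ℕ} (u v : Equiv.Perm (Fin n)) : Prop :=
  ∃ lv lu, ReducedWord v lv ∧ ReducedWord u lu ∧ lu.Sublist lv ∧ lu.length < lv.length

/-! ## Compositions, the Bruhat order on compositions -/

/-- Sum of the `k` largest entries of `η`. -/
def topSum {n : ℕ} (η : Fin n → ℕ) (k : ℕ) : ℕ :=
  ((Finset.univ : Finset (Fin n)).powersetCard (min k n)).sup fun s => ∑ i ∈ s, η i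

/-- Strict dominance order on the sorted rearrangements: `ν⁺ < η⁺`. -/
def DomLT {n : ℕ} (ν η : Fin n → ℕ) : Prop :=
  (∑ i, ν i) = (∑ i, η i) ∧ (∀ k, topSum ν k ≤ topSum η k) ∧ ∃ k, topSum ν k < topSum η k

/-- `ν⁺ = η⁺`. -/
def SortEq {n : ℕ} (ν η : Fin n → ℕ) : Prop := ∀ k, topSum ν k = topSum η k

/-- `w` sorts `η`, i.e. `η = w η⁺` : the map `i ↦ η (w i)` is weakly decreasing. -/
def Sorts {n : ℕ} (w : Equiv.Perm (Fin n)) (η : Fin n → ℕ) : Prop :=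
  ∀ i j : Fin n, i ≤ j → η (w j) ≤ η (w i)

/-- `w` is the minimal length permutation with `η = w η⁺`. -/
def IsMinSort {n : ℕ} (w : Equiv.Perm (Fin n)) (η : Fin n → ℕ) : Prop :=
  Sorts w η ∧ ∀ w', Sorts w' η → invCount w ≤ invCount w'

/-- The Bruhat order on compositions : `ν ≺ η`. -/
def CompLT {n : ℕ} (ν η : Fin n → ℕ) : Prop :=
  DomLT ν η ∨ (SortEq ν η ∧
    ∃ wη wν, IsMinSort wη η ∧ IsMinSort wν ν ∧ BruhatLT wη wν)

/-- The row (1-indexed, from the top) of the `i`-circle in the diagram of `η`. -/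
def rowOf {n : ℕ} (η : Fin n → ℕ) (i : Fin n) : ℕ :=
  (Finset.univ.filter fun j : Fin n => η i < η j ∨ (η j = η i ∧ j ≤ i)).card

/-- The eigenvalue `η̄_i = q^{η_i} t^{1 - r_η(i)}`. -/
def ebar {n : ℕ} (q t : KK) (η : Fin n → ℕ) (i : Fin n) : KK :=
  q ^ η i * t ^ (1 - (rowOf η i : ℤ))

/-- `Inv(a) = #{i < j : a_i < a_j}`. -/
def invA {m : ℕ} (a : Fin m → ℕ) : ℕ :=
  ((Finset.univ : Finset (Fin m × Fin m)).filter fun p => p.1 < p.2 ∧ a p.1 < a p.2).card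

/-- `coInv(a) = #{i < j : a_i ≥ a_j}`. -/
def coinvA {m : ℕ} (a : Fin m → ℕ) : ℕ :=
  ((Finset.univ : Finset (Fin m × Fin m)).filter fun p => p.1 < p.2 ∧ a p.2 ≤ a p.1).card

/-! ## Operators on polynomials -/

section Ops
variable {N : ℕ}

/-- The variable `x_{i+1}` (0-indexed `i`), junk `0` if out of range. -/
def XP (i : ℕ) : Pol N := if h : i < N then MvPolynomial.X (⟨i, h⟩ : Fin N) else 0

/-- The exchange operator `K_{i+1,i+2}` (0-indexed `i`). -/
def exchP (i : ℕ) : Pol N → Pol N :=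
  if h : i + 1 < N then
    fun f => MvPolynomial.rename (Equiv.swap (⟨i, Nat.lt_of_succ_lt h⟩ : Fin N) ⟨i + 1, h⟩) f
  else id

/-- The shift operator sending `x_{i+1} ↦ c·x_{i+1}` (0-indexed `i`). -/
def tauP (c : KK) (i : ℕ) : Pol N → Pol N :=
  if h : i < N then
    fun f => MvPolynomial.aeval
      (fun k : Fin N => if k = ⟨i, h⟩ then c • MvPolynomial.X k else MvPolynomial.X k) f
  else id

/-- `T` is the family of Hecke algebra generators:
`T_i = t + (t x_i - x_{i+1})/(x_i - x_{i+1}) (K_{i,i+1} - 1)`, stated after clearing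
the denominator (`T i` is the operator `T_{i+1}` in 1-indexed notation). -/
def HeckeSpec (t : KK) (T : ℕ → Pol N → Pol N) : Prop :=
  ∀ (i : ℕ), i + 1 < N → ∀ f : Pol N,
    (XP i - XP (i + 1)) * T i f =
      t • ((XP i - XP (i + 1)) * f) +
        (t • XP i - XP (i + 1)) * (exchP i f - f)

/-- Composite of a list of operators (the last element of the list acts first). -/
def opList {α : Type*} (l : List (α → α)) : α → α := l.foldr (· ∘ ·) id

/-- `T̄_i = t⁻¹ - 1 + t⁻¹ T_i`. -/
def TbarP (t : KK) (T : ℕ → Pol N → Pol N) (i : ℕ) : Pol N → Pol N :=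
  fun f => t⁻¹ • f - f + t⁻¹ • T i f

/-- `ω = K_{N-1,N} ⋯ K_{1,2} τ_1`. -/
def omegaP (q : KK) : Pol N → Pol N :=
  opList ((List.range (N - 1)).reverse.map exchP) ∘ tauP q 0

/-- The Cherednik operator `Y_{i+1} = t^{-N+i+1} T_{i+1} ⋯ T_{N-1} ω T̄_1 ⋯ T̄_i`
(0-indexed `i`). -/
def Yop (q t : KK) (T : ℕ → Pol N → Pol N) (i : ℕ) : Pol N → Pol N :=
  fun f => t ^ ((i : ℤ) + 1 - (N : ℤ)) •
    opList ((List.range' i (N - 1 - i)).map T)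
      (omegaP q (opList ((List.range i).map (TbarP t T)) f))

/-- `E` is the family of (monic) non-symmetric Macdonald polynomials: `E η` is the unique
polynomial of the form `x^η + Σ_{ν ≺ η} b_{ην} x^ν` with `Y_i E_η = η̄_i E_η` for all `i`. -/
def NSMacSpec (q t : KK) (T : ℕ → Pol N → Pol N) (E : (Fin N → ℕ) → Pol N) : Prop :=
  ∀ η : Fin N → ℕ,
    MvPolynomial.coeff (Finsupp.equivFunOnFinite.symm η) (E η) = 1 ∧
    (∀ d ∈ (E η).support, (d : Fin N → ℕ) = η ∨ CompLT (d : Fin N → ℕ) η) ∧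
    ∀ i : Fin N, Yop q t T (i : ℕ) (E η) = ebar q t η i • E η

/-- `Tp σ = T_{i_1+m} ⋯ T_{i_ℓ+m}` for a reduced word `σ = s_{i_1} ⋯ s_{i_ℓ}`,
characterized recursively. -/
def TpermSpec (m : ℕ) (T : ℕ → Pol N → Pol N)
    (Tp : Equiv.Perm (Fin (N - m)) → Pol N → Pol N) : Prop :=
  Tp 1 = id ∧
  ∀ (σ : Equiv.Perm (Fin (N - m))) (i : ℕ),
    invCount (σ * adj (N - m) i) = invCount σ + 1 →
    ∀ f, Tp (σ * adj (N - m) i) f = Tp σ (T (i + m) f)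

end Ops

/-- A reduced word for the longest element `ω_m` of `S_m` (0-indexed letters):
`(s_1)(s_2 s_1)(s_3 s_2 s_1) ⋯`. -/
def longWord (m : ℕ) : List ℕ := ((List.range m).map fun k => (List.range k).reverse).flatten

/-! ## m-partitions and their diagrams -/

/-- An `m`-partition `Λ = (a; λ)`: a composition with `m` parts together with a partition
(a weakly decreasing list of positive integers). -/
structure MPart (m : ℕ) where
  a : Fin m → ℕ
  lam : List ℕ
  sorted : lam.Pairwise (· ≥ ·)
  pos : ∀ x ∈ lam, 0 < x

namespace MPart

variable {m : ℕ}

/-- Number of entries of the diagram of `Λ`. -/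
def len (Λ : MPart m) : ℕ := m + Λ.lam.length

/-- The entries of the diagram of `Λ`: entry `k < m` is `a_{k+1}` (a row ending with the
`(k+1)`-circle), entries `m ≤ k < m + ℓ(λ)` are the parts of `λ` listed in increasing order. -/
def gamma (Λ : MPart m) : ℕ → ℕ := fun k =>
  if h : k < m then Λ.a ⟨k, h⟩ else Λ.lam.getD (m + Λ.lam.length - 1 - k) 0

/-- The entries of `Λ` whose row ends with a circle. -/
def circ (Λ : MPart m) : ℕ → Prop := fun k => k < m

/-- The degree `|Λ|`. -/
def deg (Λ : MPart m) : ℕ := (∑ i, Λ.a i) + Λ.lam.sum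

end MPart

/-! ## Arms and legs -/

/-- Row (1-indexed, from the top) of entry `i` in the diagram with `n` entries `γ`;
rows are sorted by decreasing size, entries of equal size ordered by increasing index. -/
def rRowN (n : ℕ) (γ : ℕ → ℕ) (i : ℕ) : ℕ :=
  ((Finset.range n).filter fun j => γ i < γ j ∨ (γ j = γ i ∧ j ≤ i)).card

/-- Arm `a(s)` of the cell in entry `i`, column `j+1`: cells strictly to the right,
a circle ending the row counting as one cell. -/
def armC (γ : ℕ → ℕ) (c : ℕ → Prop) (i j : ℕ) : ℕ :=
  (γ i - (j + 1)) + if c i then 1 else 0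

/-- Arm `ã(s)`: same as `a(s)` but the circle at the end of the row does not count. -/
def armT (γ : ℕ → ℕ) (i j : ℕ) : ℕ := γ i - (j + 1)

/-- Number of squares strictly below the cell in entry `i`, column `j+1`. -/
def belowCnt (n : ℕ) (γ : ℕ → ℕ) (i j : ℕ) : ℕ :=
  ((Finset.range n).filter fun k => rRowN n γ i < rRowN n γ k ∧ j + 1 ≤ γ k).card

/-- Leg `ℓ(s)` of the cell in entry `i`, column `j+1`. -/
def legC (n : ℕ) (γ : ℕ → ℕ) (c : ℕ → Prop) (i j : ℕ) : ℕ :=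
  belowCnt n γ i j +
    if c i then ((Finset.range n).filter fun k => c k ∧ γ k = j ∧ k < i).card else 0

/-- Leg `ℓ̃(s)` of the cell in entry `i`, column `j+1`. -/
def legT (n : ℕ) (γ : ℕ → ℕ) (c : ℕ → Prop) (i j : ℕ) : ℕ :=
  belowCnt n γ i j +
    if c i then ((Finset.range n).filter fun k => c k ∧ γ k = j ∧ k < i).card
    else ((Finset.range n).filter fun k => c k ∧ γ k = j).card

/-- Product over all the squares of a diagram. -/
def prodCells (n : ℕ) (γ : ℕ → ℕ) (f : ℕ → ℕ → KK) : KK :=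
  ∏ i ∈ Finset.range n, ∏ j ∈ Finset.range (γ i), f i j

/-- `∏_{s ∈ Λ} (1 - q^{ã(s)+1} t^{ℓ̃(s)}) / (1 - q^{a(s)} t^{ℓ(s)+1})`. -/
def normProd {m : ℕ} (q t : KK) (Λ : MPart m) : KK :=
  prodCells Λ.len Λ.gamma fun i j =>
    (1 - q ^ (armT Λ.gamma i j + 1) * t ^ legT Λ.len Λ.gamma Λ.circ i j) /
    (1 - q ^ armC Λ.gamma Λ.circ i j * t ^ (legC Λ.len Λ.gamma Λ.circ i j + 1))

/-- The squared norm `q^{|a|} t^{Inv(a)} ∏_{s ∈ Λ} (1-q^{ã(s)+1}t^{ℓ̃(s)})/(1-q^{a(s)}t^{ℓ(s)+1})`. -/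
def normSq {m : ℕ} (q t : KK) (Λ : MPart m) : KK :=
  q ^ (∑ i, Λ.a i) * t ^ invA Λ.a * normProd q t Λ

/-! ## Finite-variable m-symmetric Macdonald polynomials -/

/-- The composition `η_{Λ,N} = (a_1,…,a_m,λ_{N-m},…,λ_1)`. -/
def etaComp {m : ℕ} (Λ : MPart m) (N : ℕ) : Fin N → ℕ := fun k =>
  if h : (k : ℕ) < m then Λ.a ⟨k, h⟩ else Λ.lam.getD (N - 1 - (k : ℕ)) 0

/-- The `t`-factorial `[k]_u! = ∏_{j=1}^k (1-u^j)/(1-u)`. -/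
def tFact (u : KK) (k : ℕ) : KK := ∏ j ∈ Finset.range k, (1 - u ^ (j + 1)) / (1 - u)

/-- The normalization constant `u_{Λ,N}(t)`. -/
def uCoef {m : ℕ} (t : KK) (Λ : MPart m) (N : ℕ) : KK :=
  tFact t⁻¹ (N - m - Λ.lam.length) *
    (∏ i ∈ Λ.lam.toFinset, tFact t⁻¹ (Λ.lam.count i)) *
    t ^ ((N - m) * (N - m - 1) / 2)

/-- The `m`-symmetric Macdonald polynomial in `N` variables,
`P_Λ = u_{Λ,N}(t)⁻¹ S^t_{m+1,N} E_{η_{Λ,N}}`. -/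
def PN {m N : ℕ} (t : KK) (Tp : Equiv.Perm (Fin (N - m)) → Pol N → Pol N)
    (E : (Fin N → ℕ) → Pol N) (Λ : MPart m) : Pol N :=
  (uCoef t Λ N)⁻¹ • ∑ σ : Equiv.Perm (Fin (N - m)), Tp σ (E (etaComp Λ N))

/-! ## The ring of m-symmetric functions -/

/-- The ring `R_m` of `m`-symmetric functions, realized as the polynomial ring on the
variables `x_1,…,x_m` (`Sum.inl`) and the power sums `p̂_{r+1}` (`Sum.inr r`) of the
remaining variables `x_{m+1}, x_{m+2}, …`. -/
abbrev Rm (m : ℕ) : Type := MvPolynomial (Fin m ⊕ ℕ) KK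

/-- The full power sum `p_r = x_1^r + ⋯ + x_m^r + p̂_r` (for `r ≥ 1`). -/
def psumR (m : ℕ) (r : ℕ) : Rm m :=
  (∑ i : Fin m, MvPolynomial.X (Sum.inl i) ^ r) + MvPolynomial.X (Sum.inr (r - 1))

/-- `p_λ = ∏_i p_{λ_i}`. -/
def pPow (m : ℕ) (l : List ℕ) : Rm m := (l.map (psumR m)).prod

/-- `H` is the family of non-symmetric Hall–Littlewood polynomials:
`H_a = x^a` for dominant `a`, and `T_i H_a = H_{s_i a}` when `a_i > a_{i+1}`. -/
def HLSpec {m : ℕ} (Tm : ℕ → Pol m → Pol m) (H : (Fin m → ℕ) → Pol m) : Prop :=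
  (∀ a : Fin m → ℕ, (∀ i j : Fin m, i ≤ j → a j ≤ a i) →
      H a = MvPolynomial.monomial (Finsupp.equivFunOnFinite.symm a) 1) ∧
  ∀ (a : Fin m → ℕ) (i : ℕ) (h : i + 1 < m),
    a ⟨i + 1, h⟩ < a ⟨i, Nat.lt_of_succ_lt h⟩ →
    Tm i (H a) = H (a ∘ (Equiv.swap (⟨i, Nat.lt_of_succ_lt h⟩ : Fin m) ⟨i + 1, h⟩))

/-- The deformed `m`-symmetric power sum `p_Λ(x;t) = H_a(x;t) p_λ(x)`. -/
def pLam {m : ℕ} (H : (Fin m → ℕ) → Pol m) (Λ : MPart m) : Rm m :=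
  MvPolynomial.rename Sum.inl (H Λ.a) * pPow m Λ.lam

/-- `z_λ = ∏ i^{n_λ(i)} n_λ(i)!`. -/
def zNat (l : List ℕ) : ℕ :=
  ∏ i ∈ l.toFinset, i ^ l.count i * (l.count i).factorial

/-- `z_λ(q,t) = z_λ ∏_i (1-q^{λ_i})/(1-t^{λ_i})`. -/
def zQT (q t : KK) (l : List ℕ) : KK :=
  (zNat l : KK) * (l.map fun r => (1 - q ^ r) / (1 - t ^ r)).prod

/-- The scalar product `⟨·,·⟩_m` on `R_m`, defined on the basis `p_Λ(x;t)` by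
`⟨p_Λ, p_Ω⟩_m = δ_{ΛΩ} q^{|a|} t^{Inv(a)} z_λ(q,t)`. -/
def SPSpec {m : ℕ} (q t : KK) (H : (Fin m → ℕ) → Pol m)
    (sp : Rm m →ₗ[KK] Rm m →ₗ[KK] KK) : Prop :=
  ∀ Λ Ω : MPart m, sp (pLam H Λ) (pLam H Ω) =
    if Λ = Ω then q ^ (∑ i, Λ.a i) * t ^ invA Λ.a * zQT q t Λ.lam else 0

/-- Restriction to `N` variables: `x_i ↦ x_i` and `p̂_r ↦ x_{m+1}^r + ⋯ + x_N^r`. -/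
def resN (m N : ℕ) (h : m ≤ N) : Rm m →ₐ[KK] Pol N :=
  MvPolynomial.aeval fun v => match v with
    | Sum.inl i => MvPolynomial.X (Fin.castLE h i)
    | Sum.inr r =>
        ∑ j ∈ Finset.univ.filter (fun j : Fin N => m ≤ (j : ℕ)), MvPolynomial.X j ^ (r + 1)

/-- A complete set of data defining the `m`-symmetric Macdonald polynomials `P Λ ∈ R_m`
with parameters `q`, `t`: Hecke operators, non-symmetric Macdonald polynomials and
`t`-symmetrizers in every number of variables, together with the stable limits `P Λ`. -/
structure MacData (m : ℕ) (q t : KK) where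
  T : (N : ℕ) → ℕ → Pol N → Pol N
  hT : ∀ N, HeckeSpec (N := N) t (T N)
  E : (N : ℕ) → (Fin N → ℕ) → Pol N
  hE : ∀ N, NSMacSpec q t (T N) (E N)
  Tp : (N : ℕ) → Equiv.Perm (Fin (N - m)) → Pol N → Pol N
  hTp : ∀ N, TpermSpec m (T N) (Tp N)
  P : MPart m → Rm m
  hP : ∀ (Λ : MPart m) (N : ℕ) (h : m + Λ.lam.length ≤ N),
    resN m N (by omega) (P Λ) = PN t (Tp N) (E N) Λ

end MSym

namespace MSym

/-! ## Extra combinatorial/analytic helpers -/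

/-- `n(μ) = Σ_i (i-1) μ_i` for the multiset of values `v` on `Finset.range n`,
computed column-by-column as `Σ_j C(μ'_j, 2)`. -/
def nStat (n : ℕ) (v : ℕ → ℕ) : ℕ :=
  ∑ j ∈ Finset.range (∑ k ∈ Finset.range n, v k),
    Nat.choose (((Finset.range n).filter fun k => j + 1 ≤ v k).card) 2

/-- The principal specialization `u_∅ : f ↦ f(1,t,…,t^{N-1})`. -/
def evalPrincipal (N : ℕ) : Pol N →ₐ[KK] KK :=
  MvPolynomial.aeval fun i : Fin N => tq ^ (i : ℕ)

/-- The composition `γ_Λ = (a_1,…,a_m,λ_1,…,λ_ℓ,0^{N-m-ℓ})`. -/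
def gammaVal {m : ℕ} (Λ : MPart m) (N : ℕ) : Fin N → ℕ := fun k =>
  if h : (k : ℕ) < m then Λ.a ⟨k, h⟩ else Λ.lam.getD ((k : ℕ) - m) 0

/-- The evaluation `u_Λ : f ↦ f(q^{-Λ⁰_{w(1)}} t^{w(1)-1}, …)`, where `w` is the minimal
length permutation sorting `γ_Λ`; since `Λ⁰_{w(i)} = (γ_Λ)_i`, the `i`-th argument is
`q^{-(γ_Λ)_i} t^{w(i)-1}`. -/
def uEval {m : ℕ} (Λ : MPart m) (N : ℕ) (w : Equiv.Perm (Fin N)) : Pol N →ₐ[KK] KK :=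
  MvPolynomial.aeval fun i : Fin N =>
    qq ^ (-((gammaVal Λ N i : ℕ) : ℤ)) * tq ^ ((w i : ℕ))

/-- Substitution of the commuting family `Op` into the polynomial `f`, applied to `g`. -/
def substOps {N : ℕ} (f : Pol N) (Op : Fin N → Pol N → Pol N) (g : Pol N) : Pol N :=
  ∑ d ∈ f.support, MvPolynomial.coeff d f •
    (opList (List.ofFn fun i : Fin N => (Op i)^[d i])) g

/-- The `(m+1)`-partition obtained from `Λ` by adding an `(m+1)`-circle at the end of a
symmetric row of size `b`. -/
def addCirc {m : ℕ} (Λ : MPart m) (b : ℕ) : MPart (m + 1) where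
  a := Fin.snoc Λ.a b
  lam := Λ.lam.erase b
  sorted := List.Pairwise.sublist (List.erase_sublist (a := b) (l := Λ.lam)) Λ.sorted
  pos := fun x hx => Λ.pos x (List.mem_of_mem_erase hx)

/-- The coefficient `ψ_{Ω/Λ}` for `Ω = addCirc Λ b`: a product over the squares of the
column of the added circle lying in symmetric rows (`j` runs over the positions, in the
weakly decreasing list `λ`, of the parts of size `≥ b+1`). -/
def psiCoef {m : ℕ} (q t : KK) (Λ : MPart m) (b : ℕ) : KK :=
  ∏ j ∈ Finset.range Λ.lam.length,
    if b + 1 ≤ Λ.lam.getD j 0 then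
      (1 - q ^ (armC Λ.gamma Λ.circ (m + Λ.lam.length - 1 - j) b + 1) *
          t ^ legT Λ.len Λ.gamma Λ.circ (m + Λ.lam.length - 1 - j) b) /
      (1 - q ^ (armC (addCirc Λ b).gamma (addCirc Λ b).circ
            ((m + 1) + (addCirc Λ b).lam.length - 1 - j) b + 1) *
          t ^ legT (addCirc Λ b).len (addCirc Λ b).gamma (addCirc Λ b).circ
            ((m + 1) + (addCirc Λ b).lam.length - 1 - j) b)
    else 1

/-- The inclusion `i : R_m → R_{m+1}`. -/
def inclMap (m : ℕ) : Rm m →ₐ[KK] Rm (m + 1) :=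
  MvPolynomial.aeval fun v => match v with
    | Sum.inl i => MvPolynomial.X (Sum.inl i.castSucc)
    | Sum.inr r => MvPolynomial.X (Sum.inl (Fin.last m)) ^ (r + 1) + MvPolynomial.X (Sum.inr r)

/-- The restriction `r : R_{m+1} → R_m` (set `x_{m+1} = 0` and relabel). -/
def restrMap (m : ℕ) : Rm (m + 1) →ₐ[KK] Rm m :=
  MvPolynomial.aeval fun v => match v with
    | Sum.inl i => if h : (i : ℕ) < m then MvPolynomial.X (Sum.inl (⟨i, h⟩ : Fin m)) else 0
    | Sum.inr r => MvPolynomial.X (Sum.inr r)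

/-- The monomial symmetric polynomial `m_λ` in the variables `x_{m+1},…,x_N`
(inside `K[x_1,…,x_N]`). -/
def msymmAt (N m : ℕ) (l : List ℕ) : Pol N :=
  ((∏ i ∈ l.toFinset, (l.count i).factorial : ℕ) : KK)⁻¹ •
    ∑ g ∈ (Finset.univ.filter fun g : Fin l.length ↪ Fin N => ∀ k, m ≤ ((g k : Fin N) : ℕ)),
      ∏ k : Fin l.length, MvPolynomial.X (g k) ^ l.get k

/-- Partitions, as weakly decreasing lists of positive integers. -/
def PartL : Type := {l : List ℕ // l.Pairwise (· ≥ ·) ∧ ∀ x ∈ l, 0 < x}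

/-! ## Formal power series -/

/-- Coefficient-wise sum of a family of formal power series. -/
def fsum {ι V : Type*} (f : ι → MvPowerSeries V KK) : MvPowerSeries V KK :=
  fun d => ∑ᶠ i, MvPowerSeries.coeff d (f i)

/-- Exchange of the variables `u` and `v` in a formal power series. -/
def pswap {V : Type*} (u v : V) (f : MvPowerSeries V KK) : MvPowerSeries V KK :=
  fun d => f (Finsupp.equivMapDomain (Equiv.swap u v) d)

/-- The substitution `x_v ↦ c·x_v` in a formal power series. -/
def ptau {V : Type*} (c : KK) (v : V) (f : MvPowerSeries V KK) : MvPowerSeries V KK :=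
  fun d => c ^ (d v) * f d

section PS
variable {V : Type*} {N : ℕ}

/-- The variables of a copy of `x_1,…,x_N` inside a power series ring, via `emb`. -/
def xPS (emb : Fin N → V) (i : ℕ) : MvPowerSeries V KK :=
  if h : i < N then MvPowerSeries.X (emb ⟨i, h⟩) else 0

/-- The exchange operator `K_{i+1,i+2}` on the variables selected by `emb`. -/
def pswapE (emb : Fin N → V) (i : ℕ) : MvPowerSeries V KK → MvPowerSeries V KK :=
  if h : i + 1 < N then pswap (emb ⟨i, Nat.lt_of_succ_lt h⟩) (emb ⟨i + 1, h⟩) else id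

/-- The shift `x_{i+1} ↦ c x_{i+1}` on the variables selected by `emb`. -/
def ptauE (emb : Fin N → V) (c : KK) (i : ℕ) : MvPowerSeries V KK → MvPowerSeries V KK :=
  if h : i < N then ptau c (emb ⟨i, h⟩) else id

/-- Hecke operators acting on the `N` variables selected by `emb` inside a formal power
series ring (stated after clearing the denominator). -/
def HeckeSpecPS (t : KK) (emb : Fin N → V)
    (T : ℕ → MvPowerSeries V KK → MvPowerSeries V KK) : Prop :=
  ∀ (i : ℕ), i + 1 < N → ∀ f,
    (xPS emb i - xPS emb (i + 1)) * T i f =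
      t • ((xPS emb i - xPS emb (i + 1)) * f) +
        (t • xPS emb i - xPS emb (i + 1)) * (pswapE emb i f - f)

/-- `T̄_i` on power series. -/
def TbarPS (t : KK) (T : ℕ → MvPowerSeries V KK → MvPowerSeries V KK) (i : ℕ) :
    MvPowerSeries V KK → MvPowerSeries V KK :=
  fun f => t⁻¹ • f - f + t⁻¹ • T i f

/-- `ω` on the variables selected by `emb`. -/
def omegaPS (emb : Fin N → V) (q : KK) : MvPowerSeries V KK → MvPowerSeries V KK :=
  opList ((List.range (N - 1)).reverse.map (pswapE emb)) ∘ ptauE emb q 0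

/-- The Cherednik operator `Y_{i+1}` on the variables selected by `emb`. -/
def YopPS (emb : Fin N → V) (q t : KK)
    (T : ℕ → MvPowerSeries V KK → MvPowerSeries V KK) (i : ℕ) :
    MvPowerSeries V KK → MvPowerSeries V KK :=
  fun f => t ^ ((i : ℤ) + 1 - (N : ℤ)) •
    opList ((List.range' i (N - 1 - i)).map T)
      (omegaPS emb q (opList ((List.range i).map (TbarPS t T)) f))

/-- The operator `D = Y_{m+1} + ⋯ + Y_N - Σ_{i=m+1}^N t^{1-i}`. -/
def Dps (emb : Fin N → V) (m : ℕ) (q t : KK)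
    (T : ℕ → MvPowerSeries V KK → MvPowerSeries V KK) :
    MvPowerSeries V KK → MvPowerSeries V KK :=
  fun f => (∑ i ∈ Finset.Ico m N, YopPS emb q t T i f) -
    (∑ i ∈ Finset.Ico m N, t ^ (-(i : ℤ))) • f

end PS

/-! ## Kernels -/

/-- The variable set for power series in two infinite alphabets adapted to `R_m`. -/
abbrev Wm (m : ℕ) : Type := (Fin m ⊕ ℕ) ⊕ (Fin m ⊕ ℕ)

/-- `R_m` in the `x`-alphabet, inside power series on two alphabets. -/
def embX {m : ℕ} (f : Rm m) : MvPowerSeries (Wm m) KK :=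
  MvPolynomial.coeToMvPowerSeries.ringHom (MvPolynomial.rename (Sum.inl : (Fin m ⊕ ℕ) → Wm m) f)

/-- `R_m` in the `y`-alphabet, inside power series on two alphabets. -/
def embY {m : ℕ} (f : Rm m) : MvPowerSeries (Wm m) KK :=
  MvPolynomial.coeToMvPowerSeries.ringHom (MvPolynomial.rename (Sum.inr : (Fin m ⊕ ℕ) → Wm m) f)

/-- The `x`-variables `x_1,…,x_m`. -/
def xW (m : ℕ) : Fin m → Wm m := fun i => Sum.inl (Sum.inl i)

/-- The `y`-variables `y_1,…,y_m`. -/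
def yW (m : ℕ) : Fin m → Wm m := fun i => Sum.inr (Sum.inl i)

/-- The Macdonald kernel `K_0(x,y) = Σ_λ z_λ(q,t)⁻¹ p_λ(x) p_λ(y)`. -/
def K0R (m : ℕ) (q t : KK) : MvPowerSeries (Wm m) KK :=
  fsum fun l : PartL => (zQT q t l.1)⁻¹ • (embX (pPow m l.1) * embY (pPow m l.1))

/-- The kernel `K_m(x,y) = t^{-C(m,2)} K_0(x,y) T^{(x)}_{ω_m}[G]`, where `G` is the
rational factor (hypothesized separately via its defining equation). -/
def KmR (m : ℕ) (q t : KK)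
    (T : ℕ → MvPowerSeries (Wm m) KK → MvPowerSeries (Wm m) KK)
    (G : MvPowerSeries (Wm m) KK) : MvPowerSeries (Wm m) KK :=
  (t ^ m.choose 2)⁻¹ • (K0R m q t * opList ((longWord m).map T) G)

/-- The defining property of `G = ∏_{i+j≤m}(1 - t q⁻¹ x_i y_j) / ∏_{i+j≤m+1}(1 - q⁻¹ x_i y_j)`. -/
def GSpec (m : ℕ) (q t : KK) (G : MvPowerSeries (Wm m) KK) : Prop :=
  (∏ p ∈ (Finset.univ : Finset (Fin m × Fin m)).filter
      (fun p => (p.1 : ℕ) + (p.2 : ℕ) + 2 ≤ m + 1),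
        (1 - q⁻¹ • (MvPowerSeries.X (xW m p.1) * MvPowerSeries.X (yW m p.2)))) * G =
    ∏ p ∈ (Finset.univ : Finset (Fin m × Fin m)).filter
      (fun p => (p.1 : ℕ) + (p.2 : ℕ) + 2 ≤ m),
        (1 - (t * q⁻¹) • (MvPowerSeries.X (xW m p.1) * MvPowerSeries.X (yW m p.2)))

end MSym

namespace MSym


/-! ## Auxiliary development for Statement 13 -/

open MvPolynomial

section Aux0

variable {N : ℕ}

lemma X_sub_X_ne_zero {i j : Fin N} (h : i ≠ j) :
    (MvPolynomial.X i : Pol N) - MvPolynomial.X j ≠ 0 := by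
  intro hc
  have : (MvPolynomial.X i : Pol N) = MvPolynomial.X j := by
    have := sub_eq_zero.mp hc
    exact this
  exact h (MvPolynomial.X_injective this)

lemma cancelX {i j : Fin N} (h : i ≠ j) {u v : Pol N}
    (huv : (MvPolynomial.X i - MvPolynomial.X j) * u
      = (MvPolynomial.X i - MvPolynomial.X j) * v) : u = v :=
  mul_left_cancel₀ (X_sub_X_ne_zero h) huv

/-- The weighted measure `∑ k k·b_k` used for inductions. -/
def Mw {n : ℕ} (b : Fin n → ℕ) : ℕ := ∑ k : Fin n, (k : ℕ) * b k

lemma exists_ascent {n : ℕ} {b : Fin n → ℕ}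
    (h : ¬ ∀ i j : Fin n, i ≤ j → b j ≤ b i) :
    ∃ i : ℕ, ∃ hi : i + 1 < n, b ⟨i, Nat.lt_of_succ_lt hi⟩ < b ⟨i + 1, hi⟩ := by
  by_contra hc
  push_neg at hc
  apply h
  have step : ∀ (d i : ℕ) (hd : i + d < n), b ⟨i + d, hd⟩ ≤ b ⟨i, by omega⟩ := by
    intro d
    induction d with
    | zero => intro i hd; simp
    | succ d ih =>
      intro i hd
      have h1 : b ⟨i + d + 1, by omega⟩ ≤ b ⟨i + d, by omega⟩ := hc (i + d) (by omega)
      have h2 := ih i (by omega)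
      calc b ⟨i + (d + 1), hd⟩ = b ⟨i + d + 1, by omega⟩ := by congr 1
        _ ≤ b ⟨i + d, by omega⟩ := h1
        _ ≤ b ⟨i, by omega⟩ := h2
  intro i j hij
  have hj : (j : ℕ) = (i : ℕ) + ((j : ℕ) - (i : ℕ)) := by omega
  have := step ((j : ℕ) - (i : ℕ)) (i : ℕ) (by omega)
  calc b j = b ⟨(i : ℕ) + ((j : ℕ) - (i : ℕ)), by omega⟩ := by congr 1; exact Fin.ext hj
    _ ≤ b ⟨(i : ℕ), by omega⟩ := this
    _ = b i := by congr 1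

lemma sum_split_two {n : ℕ} (f : Fin n → ℕ) {I J : Fin n} (hIJ : I ≠ J) :
    ∑ k : Fin n, f k = f I + f J + ∑ k ∈ (Finset.univ.erase I).erase J, f k := by
  have h1 : ∑ k ∈ (Finset.univ.erase I).erase J, f k + f J
      = ∑ k ∈ Finset.univ.erase I, f k :=
    Finset.sum_erase_add _ _ (Finset.mem_erase.mpr ⟨hIJ.symm, Finset.mem_univ _⟩)
  have h2 : ∑ k ∈ Finset.univ.erase I, f k + f I = ∑ k : Fin n, f k :=
    Finset.sum_erase_add _ _ (Finset.mem_univ _)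
  omega

lemma Mw_swap_lt {n : ℕ} (b : Fin n → ℕ) {i : ℕ} (hi : i + 1 < n)
    (hb : b ⟨i, Nat.lt_of_succ_lt hi⟩ < b ⟨i + 1, hi⟩) :
    Mw (b ∘ Equiv.swap ⟨i, Nat.lt_of_succ_lt hi⟩ ⟨i + 1, hi⟩) < Mw b := by
  set I : Fin n := ⟨i, Nat.lt_of_succ_lt hi⟩ with hI
  set J : Fin n := ⟨i + 1, hi⟩ with hJ
  have hIJ : I ≠ J := by simp [hI, hJ, Fin.ext_iff]
  have e1 := sum_split_two (fun k => (k : ℕ) * (b (Equiv.swap I J k))) hIJ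
  have e2 := sum_split_two (fun k => (k : ℕ) * b k) hIJ
  have hrest : ∑ k ∈ (Finset.univ.erase I).erase J, (k : ℕ) * (b (Equiv.swap I J k))
      = ∑ k ∈ (Finset.univ.erase I).erase J, (k : ℕ) * b k := by
    apply Finset.sum_congr rfl
    intro k hk
    have hk1 : k ≠ J := (Finset.mem_erase.mp hk).1
    have hk2 : k ≠ I := (Finset.mem_erase.mp (Finset.mem_erase.mp hk).2).1
    rw [Equiv.swap_apply_of_ne_of_ne hk2 hk1]
  have hswI : Equiv.swap I J I = J := Equiv.swap_apply_left I J
  have hswJ : Equiv.swap I J J = I := Equiv.swap_apply_right I J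
  have lt : (I : ℕ) * b J + (J : ℕ) * b I < (I : ℕ) * b I + (J : ℕ) * b J := by
    have hIv : (I : ℕ) = i := rfl
    have hJv : (J : ℕ) = i + 1 := rfl
    rw [hIv, hJv]
    have base : i * b J + i * b I + b I < i * b I + i * b J + b J := by omega
    calc i * b J + (i + 1) * b I = i * b J + i * b I + b I := by ring
      _ < i * b I + i * b J + b J := base
      _ = i * b I + (i + 1) * b J := by ring
  unfold Mw
  have eL : ∑ k : Fin n, (k : ℕ) * ((b ∘ Equiv.swap I J) k)
      = (I : ℕ) * b J + (J : ℕ) * b I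
        + ∑ k ∈ (Finset.univ.erase I).erase J, (k : ℕ) * b k := by
    simpa [Function.comp, hswI, hswJ, hrest] using e1
  have eR : ∑ k : Fin n, (k : ℕ) * b k
      = (I : ℕ) * b I + (J : ℕ) * b J
        + ∑ k ∈ (Finset.univ.erase I).erase J, (k : ℕ) * b k := e2
  rw [eL, eR]
  omega

lemma Mw_pos_of_ascent {n : ℕ} {b : Fin n → ℕ} {i : ℕ} (hi : i + 1 < n)
    (hb : b ⟨i, Nat.lt_of_succ_lt hi⟩ < b ⟨i + 1, hi⟩) : 0 < Mw b := by
  have : (⟨i + 1, hi⟩ : Fin n) ∈ (Finset.univ : Finset (Fin n)) := Finset.mem_univ _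
  have hle : ((⟨i + 1, hi⟩ : Fin n) : ℕ) * b ⟨i + 1, hi⟩ ≤ Mw b :=
    Finset.single_le_sum (f := fun k : Fin n => (k : ℕ) * b k) (fun _ _ => Nat.zero_le _) this
  have hv : ((⟨i + 1, hi⟩ : Fin n) : ℕ) = i + 1 := rfl
  rw [hv] at hle
  have : 0 < (i + 1) * b ⟨i + 1, hi⟩ := by
    have : 0 < b ⟨i + 1, hi⟩ := by omega
    positivity
  omega

end Aux0


section Aux1

variable {N : ℕ}

lemma XP_eq {i : ℕ} (h : i < N) : (XP i : Pol N) = MvPolynomial.X ⟨i, h⟩ := dif_pos h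

lemma exchP_eq {i : ℕ} (h : i + 1 < N) (f : Pol N) :
    exchP i f = MvPolynomial.rename
      (⇑(Equiv.swap (⟨i, Nat.lt_of_succ_lt h⟩ : Fin N) ⟨i + 1, h⟩)) f := by
  rw [exchP, dif_pos h]

/-- Substitution of `0` for the variable `x_j`. -/
def evalAt0 (j : Fin N) : Pol N →ₐ[KK] Pol N :=
  MvPolynomial.aeval (fun k => if k = j then 0 else MvPolynomial.X k)

lemma evalAt0_X_self (j : Fin N) : evalAt0 j (MvPolynomial.X j) = 0 := by
  simp [evalAt0]

lemma evalAt0_X_ne {j k : Fin N} (h : k ≠ j) :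
    evalAt0 j (MvPolynomial.X k) = MvPolynomial.X k := by
  simp [evalAt0, h]

lemma evalAt0_rename (σ : Equiv.Perm (Fin N)) (j : Fin N) (f : Pol N) :
    evalAt0 j (MvPolynomial.rename (⇑σ) f)
      = MvPolynomial.rename (⇑σ) (evalAt0 (σ⁻¹ j) f) := by
  have h : (evalAt0 j).comp (MvPolynomial.rename (⇑σ))
      = (MvPolynomial.rename (⇑σ)).comp (evalAt0 (σ⁻¹ j)) := by
    apply MvPolynomial.algHom_ext
    intro k
    simp only [AlgHom.comp_apply, MvPolynomial.rename_X, evalAt0, MvPolynomial.aeval_X]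
    by_cases hk : σ k = j
    · have hk' : k = σ⁻¹ j := by rw [← hk]; simp
      simp [hk, hk']
    · have hk' : k ≠ σ⁻¹ j := fun hc => hk (by rw [hc]; simp)
      simp [hk, show ¬ k = σ.symm j from hk']
  exact AlgHom.congr_fun h f

variable {t : KK} {T : ℕ → Pol N → Pol N}

lemma T_eval_zero (hT : HeckeSpec t T) {i : ℕ} (hi : i + 1 < N) {j : Fin N}
    (hjI : j ≠ ⟨i, Nat.lt_of_succ_lt hi⟩) (hjJ : j ≠ ⟨i + 1, hi⟩)
    {f : Pol N} (hf : evalAt0 j f = 0) : evalAt0 j (T i f) = 0 := by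
  have hIJ : (⟨i, Nat.lt_of_succ_lt hi⟩ : Fin N) ≠ ⟨i + 1, hi⟩ := by
    simp [Fin.ext_iff]
  have h2 : (MvPolynomial.X ⟨i, Nat.lt_of_succ_lt hi⟩ - MvPolynomial.X ⟨i + 1, hi⟩)
      * evalAt0 j (T i f) = 0 := by
    have h := congrArg (evalAt0 j) (hT i hi f)
    rw [XP_eq (Nat.lt_of_succ_lt hi), XP_eq hi, exchP_eq hi] at h
    simp only [map_mul, map_sub, map_add, map_smul, evalAt0_rename, Equiv.swap_inv] at h
    rw [Equiv.swap_apply_of_ne_of_ne hjI hjJ] at h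
    rw [evalAt0_X_ne (Ne.symm hjI), evalAt0_X_ne (Ne.symm hjJ), hf] at h
    simpa using h
  rcases mul_eq_zero.mp h2 with h3 | h3
  · exact absurd h3 (X_sub_X_ne_zero hIJ)
  · exact h3

lemma T_eval_succ (hT : HeckeSpec t T) {i : ℕ} (hi : i + 1 < N) (f : Pol N) :
    evalAt0 ⟨i + 1, hi⟩ (T i f) =
      t • MvPolynomial.rename
        (⇑(Equiv.swap (⟨i, Nat.lt_of_succ_lt hi⟩ : Fin N) ⟨i + 1, hi⟩))
        (evalAt0 ⟨i, Nat.lt_of_succ_lt hi⟩ f) := by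
  have hIJ : (⟨i, Nat.lt_of_succ_lt hi⟩ : Fin N) ≠ ⟨i + 1, hi⟩ := by
    simp [Fin.ext_iff]
  have h := congrArg (evalAt0 ⟨i + 1, hi⟩) (hT i hi f)
  rw [XP_eq (Nat.lt_of_succ_lt hi), XP_eq hi, exchP_eq hi] at h
  simp only [map_mul, map_sub, map_add, map_smul, evalAt0_rename, Equiv.swap_inv] at h
  rw [Equiv.swap_apply_right] at h
  rw [evalAt0_X_ne hIJ, evalAt0_X_self] at h
  have hXne : (MvPolynomial.X (⟨i, Nat.lt_of_succ_lt hi⟩ : Fin N) : Pol N) ≠ 0 :=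
    MvPolynomial.X_ne_zero _
  apply mul_left_cancel₀ hXne
  simp only [sub_zero] at h
  rw [h]
  simp only [MvPolynomial.smul_eq_C_mul]
  ring

lemma swap_comp_castSucc {m i : ℕ} (hi : i + 1 < m) (hi' : i + 1 < m + 1) :
    (⇑(Equiv.swap (⟨i, Nat.lt_of_succ_lt hi'⟩ : Fin (m + 1)) ⟨i + 1, hi'⟩)) ∘ Fin.castSucc
      = Fin.castSucc ∘ ⇑(Equiv.swap (⟨i, Nat.lt_of_succ_lt hi⟩ : Fin m) ⟨i + 1, hi⟩) := by
  funext k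
  simp only [Function.comp_apply]
  by_cases h1 : k = (⟨i, Nat.lt_of_succ_lt hi⟩ : Fin m)
  · subst h1
    rw [Equiv.swap_apply_left,
      show (Fin.castSucc (⟨i, Nat.lt_of_succ_lt hi⟩ : Fin m))
        = (⟨i, Nat.lt_of_succ_lt hi'⟩ : Fin (m + 1)) from rfl,
      Equiv.swap_apply_left]
    rfl
  · by_cases h2 : k = (⟨i + 1, hi⟩ : Fin m)
    · subst h2
      rw [Equiv.swap_apply_right,
        show (Fin.castSucc (⟨i + 1, hi⟩ : Fin m)) = (⟨i + 1, hi'⟩ : Fin (m + 1)) from rfl,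
        Equiv.swap_apply_right]
      rfl
    · rw [Equiv.swap_apply_of_ne_of_ne h1 h2, Equiv.swap_apply_of_ne_of_ne]
      · intro hc; apply h1; apply Fin.ext
        have := congrArg Fin.val hc; simpa using this
      · intro hc; apply h2; apply Fin.ext
        have := congrArg Fin.val hc; simpa using this

lemma T_rename_castSucc {m : ℕ} {t : KK} {Tm : ℕ → Pol m → Pol m}
    {Tm' : ℕ → Pol (m + 1) → Pol (m + 1)}
    (hTm : HeckeSpec t Tm) (hTm' : HeckeSpec t Tm')
    {i : ℕ} (hi : i + 1 < m) (f : Pol m) :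
    Tm' i (MvPolynomial.rename Fin.castSucc f)
      = MvPolynomial.rename Fin.castSucc (Tm i f) := by
  have hi' : i + 1 < m + 1 := Nat.lt_succ_of_lt hi
  have h := hTm' i hi' (MvPolynomial.rename Fin.castSucc f)
  rw [XP_eq (Nat.lt_of_succ_lt hi'), XP_eq hi', exchP_eq hi'] at h
  have hm := congrArg (MvPolynomial.rename (Fin.castSucc : Fin m → Fin (m + 1)))
    (hTm i hi f)
  rw [XP_eq (Nat.lt_of_succ_lt hi), XP_eq hi, exchP_eq hi] at hm
  simp only [map_mul, map_sub, map_add, map_smul, MvPolynomial.rename_X] at hm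
  rw [MvPolynomial.rename_rename, ← swap_comp_castSucc hi hi',
    ← MvPolynomial.rename_rename] at hm
  rw [show (Fin.castSucc (⟨i, Nat.lt_of_succ_lt hi⟩ : Fin m))
        = (⟨i, Nat.lt_of_succ_lt hi'⟩ : Fin (m + 1)) from rfl,
    show (Fin.castSucc (⟨i + 1, hi⟩ : Fin m)) = (⟨i + 1, hi'⟩ : Fin (m + 1)) from rfl] at hm
  apply cancelX
    (show (⟨i, Nat.lt_of_succ_lt hi'⟩ : Fin (m + 1)) ≠ ⟨i + 1, hi'⟩ by simp [Fin.ext_iff])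
  rw [h]
  exact hm.symm

end Aux1

section Aux2

lemma snoc_dominant {m : ℕ} {a : Fin m → ℕ} (h : ∀ i j : Fin m, i ≤ j → a j ≤ a i) :
    ∀ i j : Fin (m + 1), i ≤ j →
      (Fin.snoc a 0 : Fin (m + 1) → ℕ) j ≤ (Fin.snoc a 0 : Fin (m + 1) → ℕ) i := by
  intro i j hij
  rcases Fin.eq_castSucc_or_eq_last j with ⟨j', rfl⟩ | rfl
  · rcases Fin.eq_castSucc_or_eq_last i with ⟨i', rfl⟩ | rfl
    · rw [Fin.snoc_castSucc, Fin.snoc_castSucc]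
      exact h i' j' (Fin.castSucc_le_castSucc_iff.mp hij)
    · exact absurd (lt_of_le_of_lt hij (Fin.castSucc_lt_last j')) (lt_irrefl _)
  · rw [Fin.snoc_last]
    exact Nat.zero_le _

lemma mapDomain_castSucc_symm {m : ℕ} (a : Fin m → ℕ) :
    Finsupp.mapDomain Fin.castSucc (Finsupp.equivFunOnFinite.symm a)
      = Finsupp.equivFunOnFinite.symm (Fin.snoc a 0) := by
  ext k
  rcases Fin.eq_castSucc_or_eq_last k with ⟨k', rfl⟩ | rfl
  · rw [Finsupp.mapDomain_apply (Fin.castSucc_injective m)]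
    simp [Fin.snoc_castSucc]
  · rw [Finsupp.mapDomain_notin_range]
    · simp [Fin.snoc_last]
    · rintro ⟨k', hk'⟩
      exact (Fin.castSucc_lt_last k').ne hk'

lemma snoc_comp_swap {m i : ℕ} (hi : i + 1 < m) (hi' : i + 1 < m + 1) (a : Fin m → ℕ) :
    (Fin.snoc a 0 : Fin (m + 1) → ℕ)
        ∘ ⇑(Equiv.swap (⟨i, Nat.lt_of_succ_lt hi'⟩ : Fin (m + 1)) ⟨i + 1, hi'⟩)
      = Fin.snoc (a ∘ ⇑(Equiv.swap (⟨i, Nat.lt_of_succ_lt hi⟩ : Fin m) ⟨i + 1, hi⟩)) 0 := by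
  funext k
  rcases Fin.eq_castSucc_or_eq_last k with ⟨k', rfl⟩ | rfl
  · have hc := congrFun (swap_comp_castSucc hi hi') k'
    simp only [Function.comp_apply] at hc ⊢
    rw [hc, Fin.snoc_castSucc, Fin.snoc_castSucc]
    rfl
  · simp only [Function.comp_apply]
    rw [Equiv.swap_apply_of_ne_of_ne, Fin.snoc_last, Fin.snoc_last]
    · simp [Fin.ext_iff]; omega
    · simp [Fin.ext_iff]; omega

lemma rename_H_snoc {m : ℕ} {t : KK} {Tm : ℕ → Pol m → Pol m}
    {H : (Fin m → ℕ) → Pol m}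
    {Tm' : ℕ → Pol (m + 1) → Pol (m + 1)} {H' : (Fin (m + 1) → ℕ) → Pol (m + 1)}
    (hTm : HeckeSpec t Tm) (hH : HLSpec Tm H)
    (hTm' : HeckeSpec t Tm') (hH' : HLSpec Tm' H') :
    ∀ a : Fin m → ℕ,
      MvPolynomial.rename Fin.castSucc (H a) = H' (Fin.snoc a 0) := by
  suffices hs : ∀ (M : ℕ) (a : Fin m → ℕ), Mw a ≤ M →
      MvPolynomial.rename Fin.castSucc (H a) = H' (Fin.snoc a 0) by
    exact fun a => hs (Mw a) a le_rfl
  intro M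
  induction M with
  | zero =>
    intro a hM
    have hdom : ∀ i j : Fin m, i ≤ j → a j ≤ a i := by
      by_contra hc
      obtain ⟨i, hi, hasc⟩ := exists_ascent hc
      exact absurd (Mw_pos_of_ascent hi hasc) (by omega)
    rw [hH.1 a hdom, hH'.1 _ (snoc_dominant hdom), MvPolynomial.rename_monomial,
      mapDomain_castSucc_symm]
  | succ M ih =>
    intro a hM
    by_cases hdom : ∀ i j : Fin m, i ≤ j → a j ≤ a i
    · rw [hH.1 a hdom, hH'.1 _ (snoc_dominant hdom), MvPolynomial.rename_monomial,
        mapDomain_castSucc_symm]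
    · obtain ⟨i, hi, hasc⟩ := exists_ascent hdom
      have hi' : i + 1 < m + 1 := Nat.lt_succ_of_lt hi
      have hca : ((a ∘ ⇑(Equiv.swap (⟨i, Nat.lt_of_succ_lt hi⟩ : Fin m) ⟨i + 1, hi⟩))
          ∘ ⇑(Equiv.swap (⟨i, Nat.lt_of_succ_lt hi⟩ : Fin m) ⟨i + 1, hi⟩)) = a := by
        funext k; simp [Function.comp, Equiv.swap_apply_self]
      have hlt : (a ∘ ⇑(Equiv.swap (⟨i, Nat.lt_of_succ_lt hi⟩ : Fin m) ⟨i + 1, hi⟩))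
            ⟨i + 1, hi⟩
          < (a ∘ ⇑(Equiv.swap (⟨i, Nat.lt_of_succ_lt hi⟩ : Fin m) ⟨i + 1, hi⟩))
            ⟨i, Nat.lt_of_succ_lt hi⟩ := by
        simp only [Function.comp_apply, Equiv.swap_apply_left, Equiv.swap_apply_right]
        exact hasc
      have hM' : Mw (a ∘ ⇑(Equiv.swap (⟨i, Nat.lt_of_succ_lt hi⟩ : Fin m) ⟨i + 1, hi⟩))
          ≤ M := by
        have := Mw_swap_lt a hi hasc; omega
      have ihc := ih _ hM'
      have hHr := hH.2 (a ∘ ⇑(Equiv.swap (⟨i, Nat.lt_of_succ_lt hi⟩ : Fin m) ⟨i + 1, hi⟩))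
        i hi hlt
      rw [hca] at hHr
      have hlt' : (Fin.snoc (a ∘ ⇑(Equiv.swap (⟨i, Nat.lt_of_succ_lt hi⟩ : Fin m)
              ⟨i + 1, hi⟩)) 0 : Fin (m + 1) → ℕ) ⟨i + 1, hi'⟩
          < (Fin.snoc (a ∘ ⇑(Equiv.swap (⟨i, Nat.lt_of_succ_lt hi⟩ : Fin m)
              ⟨i + 1, hi⟩)) 0 : Fin (m + 1) → ℕ) ⟨i, Nat.lt_of_succ_lt hi'⟩ := by
        rw [show (⟨i + 1, hi'⟩ : Fin (m + 1)) = Fin.castSucc ⟨i + 1, hi⟩ from rfl,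
          show (⟨i, Nat.lt_of_succ_lt hi'⟩ : Fin (m + 1))
            = Fin.castSucc ⟨i, Nat.lt_of_succ_lt hi⟩ from rfl,
          Fin.snoc_castSucc, Fin.snoc_castSucc]
        exact hlt
      have hHr' := hH'.2 (Fin.snoc (a ∘ ⇑(Equiv.swap (⟨i, Nat.lt_of_succ_lt hi⟩ : Fin m)
        ⟨i + 1, hi⟩)) 0) i hi' hlt'
      rw [snoc_comp_swap hi hi', hca] at hHr'
      calc MvPolynomial.rename Fin.castSucc (H a)
          = MvPolynomial.rename Fin.castSucc
            (Tm i (H (a ∘ ⇑(Equiv.swap (⟨i, Nat.lt_of_succ_lt hi⟩ : Fin m) ⟨i + 1, hi⟩)))) := by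
            rw [hHr]
        _ = Tm' i (MvPolynomial.rename Fin.castSucc
            (H (a ∘ ⇑(Equiv.swap (⟨i, Nat.lt_of_succ_lt hi⟩ : Fin m) ⟨i + 1, hi⟩)))) :=
            (T_rename_castSucc hTm hTm' hi _).symm
        _ = Tm' i (H' (Fin.snoc (a ∘ ⇑(Equiv.swap (⟨i, Nat.lt_of_succ_lt hi⟩ : Fin m)
            ⟨i + 1, hi⟩)) 0)) := by rw [ihc]
        _ = H' (Fin.snoc a 0) := hHr'

lemma evalAt0_monomial_ne {N : ℕ} {j : Fin N} {b : Fin N → ℕ} (hb : b j ≠ 0) :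
    evalAt0 j ((MvPolynomial.monomial (Finsupp.equivFunOnFinite.symm b) (1 : KK))) = 0 := by
  rw [evalAt0, MvPolynomial.aeval_monomial]
  have hjmem : j ∈ (Finsupp.equivFunOnFinite.symm b).support := by
    simpa [Finsupp.mem_support_iff] using hb
  rw [Finsupp.prod, Finset.prod_eq_zero hjmem]
  · simp
  · simp [zero_pow hb]

lemma evalAt0_H_zero {N : ℕ} {t : KK} {T : ℕ → Pol N → Pol N}
    {H : (Fin N → ℕ) → Pol N} (hT : HeckeSpec t T) (hH : HLSpec T H) :
    ∀ (b : Fin N → ℕ) (j : Fin N), 0 < b j → (∀ k : Fin N, j < k → b k < b j) →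
      evalAt0 j (H b) = 0 := by
  suffices hs : ∀ (M : ℕ) (b : Fin N → ℕ), Mw b ≤ M → ∀ (j : Fin N), 0 < b j →
      (∀ k : Fin N, j < k → b k < b j) → evalAt0 j (H b) = 0 by
    exact fun b j h1 h2 => hs (Mw b) b le_rfl j h1 h2
  intro M
  induction M with
  | zero =>
    intro b hM j h1 h2
    have hdom : ∀ i j : Fin N, i ≤ j → b j ≤ b i := by
      by_contra hc
      obtain ⟨i, hi, hasc⟩ := exists_ascent hc
      exact absurd (Mw_pos_of_ascent hi hasc) (by omega)
    rw [hH.1 b hdom]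
    exact evalAt0_monomial_ne (by omega)
  | succ M ih =>
    intro b hM j h1 h2
    by_cases hdom : ∀ i j : Fin N, i ≤ j → b j ≤ b i
    · rw [hH.1 b hdom]
      exact evalAt0_monomial_ne (by omega)
    · obtain ⟨i, hi, hasc⟩ := exists_ascent hdom
      have hca : ((b ∘ ⇑(Equiv.swap (⟨i, Nat.lt_of_succ_lt hi⟩ : Fin N) ⟨i + 1, hi⟩))
          ∘ ⇑(Equiv.swap (⟨i, Nat.lt_of_succ_lt hi⟩ : Fin N) ⟨i + 1, hi⟩)) = b := by
        funext k; simp [Function.comp, Equiv.swap_apply_self]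
      have hlt : (b ∘ ⇑(Equiv.swap (⟨i, Nat.lt_of_succ_lt hi⟩ : Fin N) ⟨i + 1, hi⟩))
            ⟨i + 1, hi⟩
          < (b ∘ ⇑(Equiv.swap (⟨i, Nat.lt_of_succ_lt hi⟩ : Fin N) ⟨i + 1, hi⟩))
            ⟨i, Nat.lt_of_succ_lt hi⟩ := by
        simp only [Function.comp_apply, Equiv.swap_apply_left, Equiv.swap_apply_right]
        exact hasc
      have hM' : Mw (b ∘ ⇑(Equiv.swap (⟨i, Nat.lt_of_succ_lt hi⟩ : Fin N) ⟨i + 1, hi⟩))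
          ≤ M := by
        have := Mw_swap_lt b hi hasc; omega
      have hHr := hH.2 (b ∘ ⇑(Equiv.swap (⟨i, Nat.lt_of_succ_lt hi⟩ : Fin N) ⟨i + 1, hi⟩))
        i hi hlt
      rw [hca] at hHr
      have hcI : (b ∘ ⇑(Equiv.swap (⟨i, Nat.lt_of_succ_lt hi⟩ : Fin N) ⟨i + 1, hi⟩))
          ⟨i, Nat.lt_of_succ_lt hi⟩ = b ⟨i + 1, hi⟩ := by
        simp [Function.comp_apply, Equiv.swap_apply_left]
      have hcJ : (b ∘ ⇑(Equiv.swap (⟨i, Nat.lt_of_succ_lt hi⟩ : Fin N) ⟨i + 1, hi⟩))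
          ⟨i + 1, hi⟩ = b ⟨i, Nat.lt_of_succ_lt hi⟩ := by
        simp [Function.comp_apply, Equiv.swap_apply_right]
      rw [← hHr]
      by_cases hjJ : j = (⟨i + 1, hi⟩ : Fin N)
      · subst hjJ
        rw [T_eval_succ hT hi]
        have hz : evalAt0 ⟨i, Nat.lt_of_succ_lt hi⟩
            (H (b ∘ ⇑(Equiv.swap (⟨i, Nat.lt_of_succ_lt hi⟩ : Fin N) ⟨i + 1, hi⟩))) = 0 := by
          apply ih _ hM' ⟨i, Nat.lt_of_succ_lt hi⟩
          · rw [hcI]; omega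
          · intro k hk
            rw [hcI]
            by_cases hkJ : k = (⟨i + 1, hi⟩ : Fin N)
            · subst hkJ; rw [hcJ]; exact hasc
            · have hkk : Equiv.swap (⟨i, Nat.lt_of_succ_lt hi⟩ : Fin N) ⟨i + 1, hi⟩ k = k :=
                Equiv.swap_apply_of_ne_of_ne (ne_of_gt hk) hkJ
              have hck : (b ∘ ⇑(Equiv.swap (⟨i, Nat.lt_of_succ_lt hi⟩ : Fin N)
                  ⟨i + 1, hi⟩)) k = b k := by simp [Function.comp_apply, hkk]
              rw [hck]
              apply h2
              have h1k : i < (k : ℕ) := hk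
              have h2k : (k : ℕ) ≠ i + 1 := fun hc => hkJ (Fin.ext hc)
              exact (by simp [Fin.lt_iff_val_lt_val]; omega)
        rw [hz]
        simp
      · by_cases hjI : j = (⟨i, Nat.lt_of_succ_lt hi⟩ : Fin N)
        · exfalso
          have hJgt : j < (⟨i + 1, hi⟩ : Fin N) := by
            rw [hjI]; simp [Fin.lt_iff_val_lt_val]
          have hb2 := h2 _ hJgt
          rw [hjI] at h1
          have hj1 : b j = b ⟨i, Nat.lt_of_succ_lt hi⟩ := by rw [hjI]
          rw [hj1] at hb2
          omega
        · apply T_eval_zero hT hi hjI hjJ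
          apply ih _ hM' j
          · have hcj : (b ∘ ⇑(Equiv.swap (⟨i, Nat.lt_of_succ_lt hi⟩ : Fin N)
                ⟨i + 1, hi⟩)) j = b j := by
              simp [Function.comp_apply, Equiv.swap_apply_of_ne_of_ne hjI hjJ]
            omega
          · intro k hk
            have hcj : (b ∘ ⇑(Equiv.swap (⟨i, Nat.lt_of_succ_lt hi⟩ : Fin N)
                ⟨i + 1, hi⟩)) j = b j := by
              simp [Function.comp_apply, Equiv.swap_apply_of_ne_of_ne hjI hjJ]
            rw [hcj]
            by_cases hkI : k = (⟨i, Nat.lt_of_succ_lt hi⟩ : Fin N)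
            · subst hkI
              rw [hcI]
              apply h2
              have : (j : ℕ) < i := hk
              simp [Fin.lt_iff_val_lt_val]; omega
            · by_cases hkJ : k = (⟨i + 1, hi⟩ : Fin N)
              · subst hkJ
                rw [hcJ]
                apply h2
                have hji : (j : ℕ) ≠ i := fun hc => hjI (Fin.ext hc)
                have : (j : ℕ) < i + 1 := hk
                simp [Fin.lt_iff_val_lt_val]; omega
              · have hkk : Equiv.swap (⟨i, Nat.lt_of_succ_lt hi⟩ : Fin N) ⟨i + 1, hi⟩ k = k :=
                  Equiv.swap_apply_of_ne_of_ne hkI hkJ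
                have hck : (b ∘ ⇑(Equiv.swap (⟨i, Nat.lt_of_succ_lt hi⟩ : Fin N)
                    ⟨i + 1, hi⟩)) k = b k := by simp [Function.comp_apply, hkk]
                rw [hck]
                exact h2 k hk

end Aux2

section Aux3

lemma homog_of_mul_X_sub {N : ℕ} {i j : Fin N} (hij : i ≠ j) {g : Pol N} {n : ℕ}
    (h : ((MvPolynomial.X i - MvPolynomial.X j) * g).IsHomogeneous (n + 1)) :
    g.IsHomogeneous n := by
  have hD : (MvPolynomial.X i - MvPolynomial.X j : Pol N).IsHomogeneous 1 := by
    have h1 := MvPolynomial.isHomogeneous_X KK i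
    have h2 := MvPolynomial.isHomogeneous_X KK j
    rw [← MvPolynomial.mem_homogeneousSubmodule] at h1 h2 ⊢
    exact Submodule.sub_mem _ h1 h2
  have hcomp : ∀ k : ℕ, k ≠ n → MvPolynomial.homogeneousComponent k g = 0 := by
    intro k hk
    by_cases hkd : k ≤ g.totalDegree
    · have expand : (MvPolynomial.X i - MvPolynomial.X j) * g
          = ∑ l ∈ Finset.range (g.totalDegree + 1),
            (MvPolynomial.X i - MvPolynomial.X j) * MvPolynomial.homogeneousComponent l g := by
        rw [← Finset.mul_sum, MvPolynomial.sum_homogeneousComponent]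
      have h2 := congrArg (fun x : Pol N => MvPolynomial.homogeneousComponent (k + 1) x) expand
      simp only [map_sum] at h2
      have hne : ¬(k + 1 = n + 1) := by omega
      rw [MvPolynomial.homogeneousComponent_of_mem
        ((MvPolynomial.mem_homogeneousSubmodule _ _).mpr h), if_neg hne] at h2
      have h3 : ∀ l ∈ Finset.range (g.totalDegree + 1),
          MvPolynomial.homogeneousComponent (k + 1)
            ((MvPolynomial.X i - MvPolynomial.X j) * MvPolynomial.homogeneousComponent l g)
          = if l = k then
              (MvPolynomial.X i - MvPolynomial.X j) * MvPolynomial.homogeneousComponent l g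
            else 0 := by
        intro l _
        rw [MvPolynomial.homogeneousComponent_of_mem
          ((MvPolynomial.mem_homogeneousSubmodule _ _).mpr
            (by simpa [add_comm] using
              hD.mul (MvPolynomial.homogeneousComponent_isHomogeneous l g)))]
        exact if_congr ⟨fun hh => by omega, fun hh => by omega⟩ rfl rfl
      rw [Finset.sum_congr rfl h3, Finset.sum_ite_eq' (Finset.range (g.totalDegree + 1))] at h2
      rw [if_pos (by simp; omega)] at h2
      rcases mul_eq_zero.mp h2.symm with h5 | h5
      · exact absurd h5 (X_sub_X_ne_zero hij)
      · exact h5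
    · exact MvPolynomial.homogeneousComponent_eq_zero _ g (by omega)
  by_cases hn : n ≤ g.totalDegree
  · have hg : g = MvPolynomial.homogeneousComponent n g := by
      conv_lhs => rw [← MvPolynomial.sum_homogeneousComponent g]
      rw [Finset.sum_eq_single n]
      · intro l _ hln; exact hcomp l hln
      · intro hnotin; exact absurd (Finset.mem_range.mpr (by omega)) hnotin
    rw [hg]
    exact MvPolynomial.homogeneousComponent_isHomogeneous n g
  · have hg : g = 0 := by
      conv_lhs => rw [← MvPolynomial.sum_homogeneousComponent g]
      apply Finset.sum_eq_zero
      intro l hl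
      exact hcomp l (by simp at hl; omega)
    rw [hg]
    exact MvPolynomial.isHomogeneous_zero _ _ _

lemma H_homog {N : ℕ} {t : KK} {T : ℕ → Pol N → Pol N} {H : (Fin N → ℕ) → Pol N}
    (hT : HeckeSpec t T) (hH : HLSpec T H) :
    ∀ b : Fin N → ℕ, (H b).IsHomogeneous (∑ k, b k) := by
  suffices hs : ∀ (M : ℕ) (b : Fin N → ℕ), Mw b ≤ M → (H b).IsHomogeneous (∑ k, b k) by
    exact fun b => hs (Mw b) b le_rfl
  have hdomcase : ∀ b : Fin N → ℕ, (∀ i j : Fin N, i ≤ j → b j ≤ b i) →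
      (H b).IsHomogeneous (∑ k, b k) := by
    intro b hdom
    rw [hH.1 b hdom]
    apply MvPolynomial.isHomogeneous_monomial
    rw [Finsupp.degree_eq_sum]
    simp
  intro M
  induction M with
  | zero =>
    intro b hM
    apply hdomcase
    by_contra hc
    obtain ⟨i, hi, hasc⟩ := exists_ascent hc
    exact absurd (Mw_pos_of_ascent hi hasc) (by omega)
  | succ M ih =>
    intro b hM
    by_cases hdom : ∀ i j : Fin N, i ≤ j → b j ≤ b i
    · exact hdomcase b hdom
    · obtain ⟨i, hi, hasc⟩ := exists_ascent hdom
      have hca : ((b ∘ ⇑(Equiv.swap (⟨i, Nat.lt_of_succ_lt hi⟩ : Fin N) ⟨i + 1, hi⟩))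
          ∘ ⇑(Equiv.swap (⟨i, Nat.lt_of_succ_lt hi⟩ : Fin N) ⟨i + 1, hi⟩)) = b := by
        funext k; simp [Function.comp, Equiv.swap_apply_self]
      have hlt : (b ∘ ⇑(Equiv.swap (⟨i, Nat.lt_of_succ_lt hi⟩ : Fin N) ⟨i + 1, hi⟩))
            ⟨i + 1, hi⟩
          < (b ∘ ⇑(Equiv.swap (⟨i, Nat.lt_of_succ_lt hi⟩ : Fin N) ⟨i + 1, hi⟩))
            ⟨i, Nat.lt_of_succ_lt hi⟩ := by
        simp only [Function.comp_apply, Equiv.swap_apply_left, Equiv.swap_apply_right]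
        exact hasc
      have hM' : Mw (b ∘ ⇑(Equiv.swap (⟨i, Nat.lt_of_succ_lt hi⟩ : Fin N) ⟨i + 1, hi⟩))
          ≤ M := by
        have := Mw_swap_lt b hi hasc; omega
      have hc := ih _ hM'
      have hHr := hH.2 (b ∘ ⇑(Equiv.swap (⟨i, Nat.lt_of_succ_lt hi⟩ : Fin N) ⟨i + 1, hi⟩))
        i hi hlt
      rw [hca] at hHr
      have hsum : ∑ k, (b ∘ ⇑(Equiv.swap (⟨i, Nat.lt_of_succ_lt hi⟩ : Fin N) ⟨i + 1, hi⟩)) k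
          = ∑ k, b k := Equiv.sum_comp _ b
      rw [hsum] at hc
      rw [← hHr]
      -- homogeneity of `T i (H c)` from the Hecke relation
      have hspec := hT i hi (H (b ∘ ⇑(Equiv.swap (⟨i, Nat.lt_of_succ_lt hi⟩ : Fin N)
        ⟨i + 1, hi⟩)))
      rw [XP_eq (Nat.lt_of_succ_lt hi), XP_eq hi, exchP_eq hi] at hspec
      have hijne : (⟨i, Nat.lt_of_succ_lt hi⟩ : Fin N) ≠ ⟨i + 1, hi⟩ := by
        simp [Fin.ext_iff]
      apply homog_of_mul_X_sub hijne
      rw [hspec]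
      have hD : (MvPolynomial.X ⟨i, Nat.lt_of_succ_lt hi⟩
          - MvPolynomial.X ⟨i + 1, hi⟩ : Pol N).IsHomogeneous 1 := by
        rw [← MvPolynomial.mem_homogeneousSubmodule]
        exact Submodule.sub_mem _
          ((MvPolynomial.mem_homogeneousSubmodule _ _).mpr (MvPolynomial.isHomogeneous_X KK _))
          ((MvPolynomial.mem_homogeneousSubmodule _ _).mpr (MvPolynomial.isHomogeneous_X KK _))
      rw [← MvPolynomial.mem_homogeneousSubmodule]
      apply Submodule.add_mem
      · apply Submodule.smul_mem
        rw [MvPolynomial.mem_homogeneousSubmodule]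
        simpa [add_comm] using hD.mul hc
      · rw [MvPolynomial.mem_homogeneousSubmodule]
        have h1 : ((t • MvPolynomial.X ⟨i, Nat.lt_of_succ_lt hi⟩
            - MvPolynomial.X ⟨i + 1, hi⟩ : Pol N)).IsHomogeneous 1 := by
          rw [← MvPolynomial.mem_homogeneousSubmodule]
          apply Submodule.sub_mem
          · exact Submodule.smul_mem _ _
              ((MvPolynomial.mem_homogeneousSubmodule _ _).mpr
                (MvPolynomial.isHomogeneous_X KK _))
          · exact (MvPolynomial.mem_homogeneousSubmodule _ _).mpr
              (MvPolynomial.isHomogeneous_X KK _)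
        have h2 : ((MvPolynomial.rename
            (⇑(Equiv.swap (⟨i, Nat.lt_of_succ_lt hi⟩ : Fin N) ⟨i + 1, hi⟩))
            (H (b ∘ ⇑(Equiv.swap (⟨i, Nat.lt_of_succ_lt hi⟩ : Fin N) ⟨i + 1, hi⟩)))
            - H (b ∘ ⇑(Equiv.swap (⟨i, Nat.lt_of_succ_lt hi⟩ : Fin N) ⟨i + 1, hi⟩)))
              : Pol N).IsHomogeneous (∑ k, b k) := by
          rw [← MvPolynomial.mem_homogeneousSubmodule]
          apply Submodule.sub_mem
          · exact (MvPolynomial.mem_homogeneousSubmodule _ _).mpr hc.rename_isHomogeneous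
          · exact (MvPolynomial.mem_homogeneousSubmodule _ _).mpr hc
        simpa [add_comm] using h1.mul h2
  
end Aux3

section Aux4

/-- Weights on the variables of `R_m`. -/
def wdegw (m : ℕ) : Fin m ⊕ ℕ → ℕ := Sum.elim (fun _ => 1) (fun r => r + 1)

lemma wdegw_pos (m : ℕ) (v : Fin m ⊕ ℕ) : 0 < wdegw m v := by
  cases v <;> simp [wdegw]

lemma weight_single {σ M : Type*} [AddCommMonoid M] (w : σ → M) (a : σ) (n : ℕ) :
    Finsupp.weight w (Finsupp.single a n) = n • w a := by
  rw [Finsupp.weight_apply, Finsupp.sum_single_index]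
  simp

lemma weight_mapDomain {σ τ M : Type*} [AddCommMonoid M] (g : σ → τ) (w : τ → M)
    (u : σ →₀ ℕ) :
    Finsupp.weight w (Finsupp.mapDomain g u) = Finsupp.weight (w ∘ g) u := by
  induction u using Finsupp.induction with
  | zero => simp
  | single_add a n f _ _ ih =>
    rw [Finsupp.mapDomain_add, map_add, map_add, ih, Finsupp.mapDomain_single,
      weight_single, weight_single]
    rfl

lemma X_pow_whom {σ : Type*} (w : σ → ℕ) (v : σ) (r : ℕ) :
    MvPolynomial.IsWeightedHomogeneous w ((MvPolynomial.X v : MvPolynomial σ KK) ^ r)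
      (r * w v) := by
  induction r with
  | zero => simpa using MvPolynomial.isWeightedHomogeneous_one KK w
  | succ r ih =>
    have h := ih.mul (MvPolynomial.isWeightedHomogeneous_X KK w v)
    rw [← pow_succ] at h
    have : r * w v + w v = (r + 1) * w v := by ring
    rwa [this] at h

lemma psumR_whom (m : ℕ) {r : ℕ} (hr : 0 < r) :
    MvPolynomial.IsWeightedHomogeneous (wdegw m) (psumR m r) r := by
  rw [psumR]
  apply MvPolynomial.IsWeightedHomogeneous.add
  · rw [← MvPolynomial.mem_weightedHomogeneousSubmodule]
    apply Submodule.sum_mem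
    intro i _
    rw [MvPolynomial.mem_weightedHomogeneousSubmodule]
    have h := X_pow_whom (wdegw m) (Sum.inl i : Fin m ⊕ ℕ) r
    simpa [wdegw] using h
  · have h := MvPolynomial.isWeightedHomogeneous_X KK (wdegw m) (Sum.inr (r - 1) : Fin m ⊕ ℕ)
    have hw : wdegw m (Sum.inr (r - 1)) = r := by simp [wdegw]; omega
    rwa [hw] at h

lemma pPow_whom (m : ℕ) (l : List ℕ) (hl : ∀ x ∈ l, 0 < x) :
    MvPolynomial.IsWeightedHomogeneous (wdegw m) (pPow m l) l.sum := by
  induction l with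
  | nil => simpa [pPow] using MvPolynomial.isWeightedHomogeneous_one KK (wdegw m)
  | cons x xs ih =>
    have h1 : pPow m (x :: xs) = psumR m x * pPow m xs := by
      simp [pPow]
    rw [h1, List.sum_cons]
    exact (psumR_whom m (hl x (List.mem_cons_self))).mul
      (ih fun y hy => hl y (List.mem_cons_of_mem _ hy))

lemma rename_inl_whom {m n : ℕ} {f : Pol m} (hf : f.IsHomogeneous n) :
    MvPolynomial.IsWeightedHomogeneous (wdegw m)
      (MvPolynomial.rename Sum.inl f : Rm m) n := by
  intro d hd
  obtain ⟨u, hu, hcoeff⟩ := MvPolynomial.coeff_rename_ne_zero _ _ _ hd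
  rw [← hu, weight_mapDomain]
  have hw : (wdegw m ∘ (Sum.inl : Fin m → Fin m ⊕ ℕ)) = (1 : Fin m → ℕ) := by
    funext i; rfl
  rw [hw]
  exact hf hcoeff

lemma pLam_whom {m : ℕ} {t : KK} {Tm : ℕ → Pol m → Pol m} {H : (Fin m → ℕ) → Pol m}
    (hTm : HeckeSpec t Tm) (hH : HLSpec Tm H) (Λ : MPart m) :
    MvPolynomial.IsWeightedHomogeneous (wdegw m) (pLam H Λ) Λ.deg := by
  rw [pLam, MPart.deg]
  exact (rename_inl_whom (H_homog hTm hH Λ.a)).mul (pPow_whom m Λ.lam Λ.pos)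

lemma qq_tq_pow_ne_one {i : Fin 2} {r : ℕ} (hr : 0 < r) :
    (algebraMap (MvPolynomial (Fin 2) ℚ) KK (MvPolynomial.X i)) ^ r ≠ 1 := by
  intro hc
  have hinj : Function.Injective (algebraMap (MvPolynomial (Fin 2) ℚ) KK) :=
    IsFractionRing.injective _ _
  rw [← map_pow, ← map_one (algebraMap (MvPolynomial (Fin 2) ℚ) KK)] at hc
  have h2 := congrArg MvPolynomial.totalDegree (hinj hc)
  rw [MvPolynomial.totalDegree_X_pow, MvPolynomial.totalDegree_one] at h2
  omega

lemma qq_ne_zero : qq ≠ 0 := by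
  rw [qq]
  intro hc
  have hinj : Function.Injective (algebraMap (MvPolynomial (Fin 2) ℚ) KK) :=
    IsFractionRing.injective _ _
  rw [← map_zero (algebraMap (MvPolynomial (Fin 2) ℚ) KK)] at hc
  exact MvPolynomial.X_ne_zero _ (hinj hc)

lemma tq_ne_zero : tq ≠ 0 := by
  rw [tq]
  intro hc
  have hinj : Function.Injective (algebraMap (MvPolynomial (Fin 2) ℚ) KK) :=
    IsFractionRing.injective _ _
  rw [← map_zero (algebraMap (MvPolynomial (Fin 2) ℚ) KK)] at hc
  exact MvPolynomial.X_ne_zero _ (hinj hc)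

lemma zQT_ne_zero {l : List ℕ} (hl : ∀ x ∈ l, 0 < x) : zQT qq tq l ≠ 0 := by
  rw [zQT]
  apply mul_ne_zero
  · rw [zNat]
    have hpos : 0 < ∏ i ∈ l.toFinset, i ^ l.count i * (l.count i).factorial := by
      apply Finset.prod_pos
      intro i hi
      have : 0 < i := hl i (List.mem_toFinset.mp hi)
      positivity
    exact_mod_cast Nat.cast_ne_zero.mpr hpos.ne'
  · apply List.prod_ne_zero
    intro hc
    rw [List.mem_map] at hc
    obtain ⟨r, hrl, hr0⟩ := hc
    have hr : 0 < r := hl r hrl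
    apply absurd hr0
    apply div_ne_zero
    · exact sub_ne_zero.mpr (Ne.symm (qq_tq_pow_ne_one hr))
    · exact sub_ne_zero.mpr (Ne.symm (qq_tq_pow_ne_one hr))

lemma norm_ne_zero (m : ℕ) (Λ : MPart m) :
    qq ^ (∑ i, Λ.a i) * tq ^ invA Λ.a * zQT qq tq Λ.lam ≠ 0 :=
  mul_ne_zero (mul_ne_zero (pow_ne_zero _ qq_ne_zero) (pow_ne_zero _ tq_ne_zero))
    (zQT_ne_zero Λ.pos)

lemma pLam_indep {m : ℕ} {H : (Fin m → ℕ) → Pol m}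
    {sp : Rm m →ₗ[KK] Rm m →ₗ[KK] KK} (hsp : SPSpec qq tq H sp) :
    LinearIndependent KK (pLam H) := by
  rw [linearIndependent_iff']
  intro s g hsum Λ hΛ
  have h0 : (0 : KK) = ∑ Ω ∈ s, g Ω * sp (pLam H Ω) (pLam H Λ) := by
    have h1 := congrArg (fun x => sp x (pLam H Λ)) hsum
    simp only [map_sum, map_smul, LinearMap.coe_sum, Finset.sum_apply,
      LinearMap.smul_apply, smul_eq_mul, LinearMap.zero_apply, map_zero] at h1
    rw [← h1]
  have h2 : ∀ Ω ∈ s, g Ω * sp (pLam H Ω) (pLam H Λ)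
      = if Ω = Λ then g Ω * (qq ^ (∑ i, Λ.a i) * tq ^ invA Λ.a * zQT qq tq Λ.lam) else 0 := by
    intro Ω _
    rw [hsp Ω Λ]
    split_ifs with hh
    · rw [hh]
    · ring
  rw [Finset.sum_congr rfl h2, Finset.sum_ite_eq' s] at h0
  rw [if_pos hΛ] at h0
  rcases mul_eq_zero.mp h0.symm with h3 | h3
  · exact h3
  · exact absurd h3 (norm_ne_zero m Λ)

end Aux4

section Aux5

/-- Finitely supported exponent vector from data on a finite window. -/
def thetaF (m n : ℕ) (g : (Fin m ⊕ Fin n) → Fin (n + 1)) : (Fin m ⊕ ℕ) →₀ ℕ :=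
  Finsupp.onFinset ((Finset.univ : Finset (Fin m ⊕ Fin n)).image (Sum.map id Fin.val))
    (fun v => match v with
      | Sum.inl i => (g (Sum.inl i) : ℕ)
      | Sum.inr r => if h : r < n then (g (Sum.inr ⟨r, h⟩) : ℕ) else 0)
    (by
      intro v hv
      rcases v with i | r
      · exact Finset.mem_image.mpr ⟨Sum.inl i, Finset.mem_univ _, rfl⟩
      · simp only at hv
        by_cases h : r < n
        · exact Finset.mem_image.mpr ⟨Sum.inr ⟨r, h⟩, Finset.mem_univ _, rfl⟩
        · rw [dif_neg h] at hv; exact absurd rfl hv)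

/-- The set of exponent vectors of weighted degree at most `n`. -/
def Sfin (m n : ℕ) : Finset ((Fin m ⊕ ℕ) →₀ ℕ) :=
  (Finset.univ.image (thetaF m n)).filter
    (fun d => (Finsupp.weight (wdegw m)) d ≤ n)

lemma mem_Sfin {m n : ℕ} {d : (Fin m ⊕ ℕ) →₀ ℕ} :
    d ∈ Sfin m n ↔ (Finsupp.weight (wdegw m)) d ≤ n := by
  constructor
  · intro hd
    exact (Finset.mem_filter.mp hd).2
  · intro hd
    rw [Sfin, Finset.mem_filter]
    refine ⟨?_, hd⟩
    rw [Finset.mem_image]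
    have hbound : ∀ v : Fin m ⊕ ℕ, d v ≤ n := by
      intro v
      by_cases h0 : d v = 0
      · omega
      · have h1 : d v ≤ Finsupp.weight (wdegw m) d := by
          calc d v ≤ d v * wdegw m v := Nat.le_mul_of_pos_right _ (wdegw_pos m v)
            _ ≤ Finsupp.weight (wdegw m) d := by
              rw [Finsupp.weight_apply, Finsupp.sum]
              refine Finset.single_le_sum (f := fun v => d v • wdegw m v)
                (fun _ _ => Nat.zero_le _) (Finsupp.mem_support_iff.mpr h0)
        omega
    refine ⟨fun v => ⟨d (Sum.map id Fin.val v), Nat.lt_succ_of_le (hbound _)⟩,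
      Finset.mem_univ _, ?_⟩
    ext v
    rcases v with i | r
    · rfl
    · show (if h : r < n then d (Sum.map id Fin.val (Sum.inr (⟨r, h⟩ : Fin n))) else 0) = _
      by_cases h : r < n
      · rw [dif_pos h]; rfl
      · rw [dif_neg h]
        by_contra hne
        have hne' : d (Sum.inr r) ≠ 0 := fun hc => hne hc.symm
        have h2 : wdegw m (Sum.inr r) ≤ Finsupp.weight (wdegw m) d := by
          calc wdegw m (Sum.inr r) ≤ d (Sum.inr r) * wdegw m (Sum.inr r) :=
              Nat.le_mul_of_pos_left _ (by omega)
            _ ≤ _ := by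
              rw [Finsupp.weight_apply, Finsupp.sum]
              exact Finset.single_le_sum (f := fun v => d v • wdegw m v)
                (fun _ _ => Nat.zero_le _) (Finsupp.mem_support_iff.mpr hne')
        have : wdegw m (Sum.inr r) = r + 1 := rfl
        omega

lemma Sfin_inr_zero {m n : ℕ} {d : (Fin m ⊕ ℕ) →₀ ℕ} (hd : d ∈ Sfin m n)
    {r : ℕ} (hr : n ≤ r) : d (Sum.inr r) = 0 := by
  by_contra hne
  have h2 : wdegw m (Sum.inr r) ≤ Finsupp.weight (wdegw m) d := by
    calc wdegw m (Sum.inr r) ≤ d (Sum.inr r) * wdegw m (Sum.inr r) :=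
        Nat.le_mul_of_pos_left _ (by omega)
      _ ≤ _ := by
        rw [Finsupp.weight_apply, Finsupp.sum]
        exact Finset.single_le_sum (f := fun v => d v • wdegw m v)
          (fun _ _ => Nat.zero_le _) (Finsupp.mem_support_iff.mpr hne)
  have h3 : wdegw m (Sum.inr r) = r + 1 := rfl
  have h4 := mem_Sfin.mp hd
  omega

/-- The partition built from multiplicities below `n`. -/
def lamListF : ℕ → (ℕ → ℕ) → List ℕ
  | 0, _ => []
  | n + 1, e => List.replicate (e n) (n + 1) ++ lamListF n e

lemma lamListF_mem {n : ℕ} {e : ℕ → ℕ} {x : ℕ} (hx : x ∈ lamListF n e) :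
    0 < x ∧ x ≤ n := by
  induction n with
  | zero => simp [lamListF] at hx
  | succ n ih =>
    rw [lamListF, List.mem_append] at hx
    rcases hx with hx | hx
    · have := List.eq_of_mem_replicate hx
      omega
    · have := ih hx
      omega

lemma sorted_replicate_ge (k x : ℕ) : (List.replicate k x).Pairwise (· ≥ ·) := by
  induction k with
  | zero => simp
  | succ k ih =>
    rw [List.replicate_succ, List.pairwise_cons]
    exact ⟨fun b hb => le_of_eq (List.eq_of_mem_replicate hb), ih⟩

lemma lamListF_sorted (n : ℕ) (e : ℕ → ℕ) : (lamListF n e).Pairwise (· ≥ ·) := by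
  induction n with
  | zero => simp [lamListF]
  | succ n ih =>
    rw [lamListF]
    show List.Pairwise _ _
    rw [List.pairwise_append]
    refine ⟨sorted_replicate_ge _ _, ih, ?_⟩
    intro a ha b hb
    have h1 := List.eq_of_mem_replicate ha
    have h2 := lamListF_mem hb
    omega

lemma lamListF_sum (n : ℕ) (e : ℕ → ℕ) :
    (lamListF n e).sum = ∑ r ∈ Finset.range n, e r * (r + 1) := by
  induction n with
  | zero => simp [lamListF]
  | succ n ih =>
    rw [lamListF, List.sum_append, ih, Finset.sum_range_succ, List.sum_replicate]
    simp [smul_eq_mul]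
    ring

lemma lamListF_count (n : ℕ) (e : ℕ → ℕ) {r : ℕ} (hr : r < n) :
    (lamListF n e).count (r + 1) = e r := by
  induction n with
  | zero => exact absurd hr (Nat.not_lt_zero r)
  | succ n ih =>
    rw [lamListF, List.count_append]
    by_cases h : r = n
    · subst h
      have hz : (lamListF r e).count (r + 1) = 0 := by
        rw [List.count_eq_zero]
        intro hc
        have := lamListF_mem hc
        omega
      rw [hz, List.count_replicate, if_pos (by simp)]
      omega
    · have hz : List.count (r + 1) (List.replicate (e n) (n + 1)) = 0 := by
        rw [List.count_replicate, if_neg (by simp; omega)]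
      rw [hz, ih (by omega)]
      omega

/-- The `m`-partition associated with an exponent vector. -/
def mpartOf (m n : ℕ) (d : (Fin m ⊕ ℕ) →₀ ℕ) : MPart m where
  a := fun i => d (Sum.inl i)
  lam := lamListF n (fun r => d (Sum.inr r))
  sorted := lamListF_sorted _ _
  pos := fun x hx => (lamListF_mem hx).1

lemma MPart.ext' {m : ℕ} {Λ Ω : MPart m} (h1 : Λ.a = Ω.a) (h2 : Λ.lam = Ω.lam) :
    Λ = Ω := by
  cases Λ; cases Ω
  simp only at h1 h2
  subst h1; subst h2
  rfl

lemma mpartOf_inj {m n : ℕ} {d d' : (Fin m ⊕ ℕ) →₀ ℕ}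
    (hd : d ∈ Sfin m n) (hd' : d' ∈ Sfin m n)
    (h : mpartOf m n d = mpartOf m n d') : d = d' := by
  ext v
  rcases v with i | r
  · exact congrFun (congrArg MPart.a h) i
  · by_cases hr : r < n
    · have hc := congrArg (fun Λ : MPart m => Λ.lam.count (r + 1)) h
      simp only [mpartOf] at hc
      rw [lamListF_count n _ hr, lamListF_count n _ hr] at hc
      exact hc
    · rw [Sfin_inr_zero hd (by omega), Sfin_inr_zero hd' (by omega)]

lemma weight_eq_of_small {m n : ℕ} (d : (Fin m ⊕ ℕ) →₀ ℕ)
    (hd : ∀ r : ℕ, n ≤ r → d (Sum.inr r) = 0) :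
    (Finsupp.weight (wdegw m)) d
      = (∑ i : Fin m, d (Sum.inl i)) + ∑ r ∈ Finset.range n, d (Sum.inr r) * (r + 1) := by
  classical
  have hsub : d.support ⊆
      (Finset.univ.image (Sum.inl : Fin m → Fin m ⊕ ℕ))
        ∪ ((Finset.range n).image (Sum.inr : ℕ → Fin m ⊕ ℕ)) := by
    intro v hv
    rcases v with i | r
    · exact Finset.mem_union_left _ (Finset.mem_image.mpr ⟨i, Finset.mem_univ _, rfl⟩)
    · apply Finset.mem_union_right
      rw [Finset.mem_image]
      refine ⟨r, Finset.mem_range.mpr ?_, rfl⟩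
      by_contra hc
      exact (Finsupp.mem_support_iff.mp hv) (hd r (by omega))
  rw [Finsupp.weight_apply, Finsupp.sum]
  rw [Finset.sum_subset hsub (by
    intro x _ hx
    rw [Finsupp.notMem_support_iff.mp hx]
    simp)]
  rw [Finset.sum_union (by
    rw [Finset.disjoint_left]
    intro x hx1 hx2
    rw [Finset.mem_image] at hx1 hx2
    obtain ⟨i, _, rfl⟩ := hx1
    obtain ⟨r, _, hc⟩ := hx2
    exact Sum.inl_ne_inr hc.symm)]
  congr 1
  · rw [Finset.sum_image (by intro a _ b _ h; exact Sum.inl_injective h)]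
    apply Finset.sum_congr rfl
    intro i _
    simp [wdegw]
  · rw [Finset.sum_image (by intro a _ b _ h; exact Sum.inr_injective h)]
    apply Finset.sum_congr rfl
    intro r _
    simp [wdegw, smul_eq_mul]

lemma mpartOf_deg {m n : ℕ} {d : (Fin m ⊕ ℕ) →₀ ℕ} (hd : d ∈ Sfin m n) :
    (mpartOf m n d).deg = (Finsupp.weight (wdegw m)) d := by
  rw [MPart.deg, mpartOf, weight_eq_of_small d (fun r hr => Sfin_inr_zero hd hr)]
  simp only
  rw [lamListF_sum]

lemma whom_mem_span_monomials {m n k : ℕ} {f : Rm m}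
    (hf : MvPolynomial.IsWeightedHomogeneous (wdegw m) f k) (hk : k ≤ n) :
    f ∈ Submodule.span KK
      (Set.range (fun d' : ↥(Sfin m n) =>
        (MvPolynomial.monomial (d' : (Fin m ⊕ ℕ) →₀ ℕ) (1 : KK) : Rm m))) := by
  rw [← MvPolynomial.support_sum_monomial_coeff f]
  apply Submodule.sum_mem
  intro d hd
  have hw : (Finsupp.weight (wdegw m)) d = k := hf (MvPolynomial.mem_support_iff.mp hd)
  have hdS : d ∈ Sfin m n := mem_Sfin.mpr (by omega)
  have : (MvPolynomial.monomial d (MvPolynomial.coeff d f) : Rm m)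
      = MvPolynomial.coeff d f • MvPolynomial.monomial d 1 := by
    rw [MvPolynomial.smul_monomial, smul_eq_mul, mul_one]
  rw [this]
  exact Submodule.smul_mem _ _ (Submodule.subset_span ⟨⟨d, hdS⟩, rfl⟩)

lemma span_pLam {m : ℕ} {t : KK} {Tm : ℕ → Pol m → Pol m} {H : (Fin m → ℕ) → Pol m}
    {sp : Rm m →ₗ[KK] Rm m →ₗ[KK] KK}
    (hTm : HeckeSpec t Tm) (hH : HLSpec Tm H) (hsp : SPSpec qq tq H sp) :
    ∀ f : Rm m, f ∈ Submodule.span KK (Set.range (pLam H)) := by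
  have key : ∀ (n : ℕ) (d : (Fin m ⊕ ℕ) →₀ ℕ), (Finsupp.weight (wdegw m)) d ≤ n →
      (MvPolynomial.monomial d (1 : KK) : Rm m)
        ∈ Submodule.span KK (Set.range (pLam H)) := by
    intro n d hd
    have hbind : LinearIndependent KK (fun d' : ↥(Sfin m n) =>
        (MvPolynomial.monomial (d' : (Fin m ⊕ ℕ) →₀ ℕ) (1 : KK) : Rm m)) := by
      have hb := (MvPolynomial.basisMonomials (Fin m ⊕ ℕ) KK).linearIndependent
      have := hb.comp (fun d' : ↥(Sfin m n) => (d' : (Fin m ⊕ ℕ) →₀ ℕ)) Subtype.val_injective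
      rw [MvPolynomial.coe_basisMonomials] at this
      exact this
    have hpinj : Function.Injective (fun d' : ↥(Sfin m n) => mpartOf m n (d' : (Fin m ⊕ ℕ) →₀ ℕ)) := by
      intro x y hxy
      exact Subtype.ext (mpartOf_inj x.2 y.2 hxy)
    have hpind : LinearIndependent KK (fun d' : ↥(Sfin m n) =>
        pLam H (mpartOf m n (d' : (Fin m ⊕ ℕ) →₀ ℕ))) :=
      (pLam_indep hsp).comp _ hpinj
    have hVW : Submodule.span KK (Set.range (fun d' : ↥(Sfin m n) =>
          pLam H (mpartOf m n (d' : (Fin m ⊕ ℕ) →₀ ℕ))))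
        ≤ Submodule.span KK (Set.range (fun d' : ↥(Sfin m n) =>
          (MvPolynomial.monomial (d' : (Fin m ⊕ ℕ) →₀ ℕ) (1 : KK) : Rm m))) := by
      rw [Submodule.span_le]
      rintro x ⟨d', rfl⟩
      have hw := pLam_whom hTm hH (mpartOf m n (d' : (Fin m ⊕ ℕ) →₀ ℕ))
      have hdeg : (mpartOf m n (d' : (Fin m ⊕ ℕ) →₀ ℕ)).deg ≤ n := by
        rw [mpartOf_deg d'.2]
        exact mem_Sfin.mp d'.2
      exact whom_mem_span_monomials hw hdeg
    have hrk1 := finrank_span_eq_card hbind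
    have hrk2 := finrank_span_eq_card hpind
    have hfd : FiniteDimensional KK (Submodule.span KK (Set.range (fun d' : ↥(Sfin m n) =>
        (MvPolynomial.monomial (d' : (Fin m ⊕ ℕ) →₀ ℕ) (1 : KK) : Rm m)))) :=
      FiniteDimensional.span_of_finite KK (Set.finite_range _)
    have heq := Submodule.eq_of_le_of_finrank_le hVW (by rw [hrk1, hrk2])
    have hmem : (MvPolynomial.monomial d (1 : KK) : Rm m)
        ∈ Submodule.span KK (Set.range (fun d' : ↥(Sfin m n) =>
          (MvPolynomial.monomial (d' : (Fin m ⊕ ℕ) →₀ ℕ) (1 : KK) : Rm m))) :=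
      Submodule.subset_span ⟨⟨d, mem_Sfin.mpr hd⟩, rfl⟩
    rw [← heq] at hmem
    refine Submodule.span_mono ?_ hmem
    rintro x ⟨d', rfl⟩
    exact ⟨mpartOf m n (d' : (Fin m ⊕ ℕ) →₀ ℕ), rfl⟩
  intro f
  rw [← MvPolynomial.support_sum_monomial_coeff f]
  apply Submodule.sum_mem
  intro d _
  have : (MvPolynomial.monomial d (MvPolynomial.coeff d f) : Rm m)
      = MvPolynomial.coeff d f • MvPolynomial.monomial d 1 := by
    rw [MvPolynomial.smul_monomial, smul_eq_mul, mul_one]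
  rw [this]
  exact Submodule.smul_mem _ _ (key _ d le_rfl)

end Aux5

section Aux6

/-- Add a circle part `0` at the end. -/
def snocPart {m : ℕ} (Λ : MPart m) : MPart (m + 1) where
  a := Fin.snoc Λ.a 0
  lam := Λ.lam
  sorted := Λ.sorted
  pos := Λ.pos

/-- Forget the last circle part. -/
def dropPart {m : ℕ} (Ω : MPart (m + 1)) : MPart m where
  a := Ω.a ∘ Fin.castSucc
  lam := Ω.lam
  sorted := Ω.sorted
  pos := Ω.pos

lemma snocPart_last {m : ℕ} (Λ : MPart m) : (snocPart Λ).a (Fin.last m) = 0 := by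
  show (Fin.snoc Λ.a 0 : Fin (m + 1) → ℕ) (Fin.last m) = 0
  rw [Fin.snoc_last]

lemma snocPart_eq_iff {m : ℕ} {Λ : MPart m} {Ω : MPart (m + 1)}
    (h0 : Ω.a (Fin.last m) = 0) : snocPart Λ = Ω ↔ Λ = dropPart Ω := by
  constructor
  · intro h
    rw [← h]
    apply MPart.ext'
    · funext i
      show Λ.a i = (Fin.snoc Λ.a 0 : Fin (m + 1) → ℕ) (Fin.castSucc i)
      rw [Fin.snoc_castSucc]
    · rfl
  · intro h
    rw [h]
    apply MPart.ext'
    · funext k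
      show (Fin.snoc (Ω.a ∘ Fin.castSucc) 0 : Fin (m + 1) → ℕ) k = Ω.a k
      rcases Fin.eq_castSucc_or_eq_last k with ⟨k', rfl⟩ | rfl
      · rw [Fin.snoc_castSucc]; rfl
      · rw [Fin.snoc_last]; exact h0.symm
    · rfl

lemma sum_snoc {m : ℕ} (a : Fin m → ℕ) :
    ∑ i : Fin (m + 1), (Fin.snoc a 0 : Fin (m + 1) → ℕ) i = ∑ i, a i := by
  rw [Fin.sum_univ_castSucc]
  simp [Fin.snoc_castSucc, Fin.snoc_last]

lemma invA_snoc {m : ℕ} (a : Fin m → ℕ) :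
    invA (Fin.snoc a 0 : Fin (m + 1) → ℕ) = invA a := by
  rw [invA, invA]
  symm
  apply Finset.card_bij (fun (p : Fin m × Fin m) _ =>
    ((Fin.castSucc p.1, Fin.castSucc p.2) : Fin (m + 1) × Fin (m + 1)))
  · intro p hp
    rw [Finset.mem_filter] at hp ⊢
    refine ⟨Finset.mem_univ _, Fin.castSucc_lt_castSucc_iff.mpr hp.2.1, ?_⟩
    show (Fin.snoc a 0 : Fin (m + 1) → ℕ) (Fin.castSucc p.1)
      < (Fin.snoc a 0 : Fin (m + 1) → ℕ) (Fin.castSucc p.2)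
    rw [Fin.snoc_castSucc, Fin.snoc_castSucc]
    exact hp.2.2
  · intro p hp q hq h
    have h1 := congrArg Prod.fst h
    have h2 := congrArg Prod.snd h
    simp only at h1 h2
    exact Prod.ext (Fin.castSucc_injective m h1) (Fin.castSucc_injective m h2)
  · intro q hq
    rw [Finset.mem_filter] at hq
    obtain ⟨-, hlt, hval⟩ := hq
    rcases Fin.eq_castSucc_or_eq_last q.2 with ⟨q2, hq2⟩ | hq2
    · rcases Fin.eq_castSucc_or_eq_last q.1 with ⟨q1, hq1⟩ | hq1
      · refine ⟨(q1, q2), Finset.mem_filter.mpr ⟨Finset.mem_univ _, ?_, ?_⟩, ?_⟩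
        · rw [hq1, hq2] at hlt
          exact Fin.castSucc_lt_castSucc_iff.mp hlt
        · rw [hq1, hq2, Fin.snoc_castSucc, Fin.snoc_castSucc] at hval
          exact hval
        · rw [Prod.ext_iff]
          exact ⟨hq1.symm, hq2.symm⟩
      · exfalso
        rw [hq1] at hlt
        exact absurd (lt_of_lt_of_le hlt (Fin.le_last _)) (lt_irrefl _)
    · exfalso
      rw [hq2, Fin.snoc_last] at hval
      omega

/-- Set `x_{m+1} = 0` inside `K[x_1,…,x_{m+1}]`, landing in `K[x_1,…,x_m]`. -/
def psiHom (m : ℕ) : Pol (m + 1) →ₐ[KK] Pol m :=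
  MvPolynomial.aeval (fun k : Fin (m + 1) =>
    if h : (k : ℕ) < m then MvPolynomial.X (⟨(k : ℕ), h⟩ : Fin m) else 0)

lemma psi_rename_castSucc {m : ℕ} (f : Pol m) :
    psiHom m (MvPolynomial.rename Fin.castSucc f) = f := by
  have h : (psiHom m).comp (MvPolynomial.rename (Fin.castSucc : Fin m → Fin (m + 1)))
      = AlgHom.id KK (Pol m) := by
    apply MvPolynomial.algHom_ext
    intro k
    simp only [AlgHom.comp_apply, MvPolynomial.rename_X, AlgHom.id_apply, psiHom,
      MvPolynomial.aeval_X]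
    rw [dif_pos (show ((Fin.castSucc k : Fin (m + 1)) : ℕ) < m from k.isLt)]
    exact congrArg MvPolynomial.X (Fin.ext rfl)
  exact AlgHom.congr_fun h f

lemma psi_evalAt0_last {m : ℕ} (f : Pol (m + 1)) :
    psiHom m f = psiHom m (evalAt0 (Fin.last m) f) := by
  have h : (psiHom m) = (psiHom m).comp (evalAt0 (Fin.last m)) := by
    apply MvPolynomial.algHom_ext
    intro k
    rw [AlgHom.comp_apply]
    by_cases hk : k = Fin.last m
    · subst hk
      rw [evalAt0_X_self, map_zero, psiHom, MvPolynomial.aeval_X,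
        dif_neg (by simp)]
    · rw [evalAt0_X_ne hk]
  exact AlgHom.congr_fun h f

lemma restr_rename_inl {m : ℕ} (g : Pol (m + 1)) :
    restrMap m (MvPolynomial.rename Sum.inl g)
      = MvPolynomial.rename Sum.inl (psiHom m g) := by
  have h : (restrMap m).comp
        (MvPolynomial.rename (Sum.inl : Fin (m + 1) → Fin (m + 1) ⊕ ℕ))
      = (MvPolynomial.rename (Sum.inl : Fin m → Fin m ⊕ ℕ)).comp (psiHom m) := by
    apply MvPolynomial.algHom_ext
    intro k
    simp only [AlgHom.comp_apply, MvPolynomial.rename_X, restrMap, psiHom,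
      MvPolynomial.aeval_X]
    by_cases hk : (k : ℕ) < m
    · rw [dif_pos hk, dif_pos hk, MvPolynomial.rename_X]
    · rw [dif_neg hk, dif_neg hk, map_zero]
  exact AlgHom.congr_fun h g

lemma incl_rename_inl {m : ℕ} (f : Pol m) :
    inclMap m (MvPolynomial.rename Sum.inl f)
      = MvPolynomial.rename Sum.inl (MvPolynomial.rename Fin.castSucc f) := by
  have h : (inclMap m).comp (MvPolynomial.rename (Sum.inl : Fin m → Fin m ⊕ ℕ))
      = (MvPolynomial.rename (Sum.inl : Fin (m + 1) → Fin (m + 1) ⊕ ℕ)).comp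
          (MvPolynomial.rename (Fin.castSucc : Fin m → Fin (m + 1))) := by
    apply MvPolynomial.algHom_ext
    intro k
    simp only [AlgHom.comp_apply, MvPolynomial.rename_X, inclMap, MvPolynomial.aeval_X]
  exact AlgHom.congr_fun h f

lemma incl_psumR {m r : ℕ} (hr : 0 < r) : inclMap m (psumR m r) = psumR (m + 1) r := by
  rw [psumR, psumR, map_add, map_sum]
  have hx : inclMap m (MvPolynomial.X (Sum.inr (r - 1)))
      = MvPolynomial.X (Sum.inl (Fin.last m)) ^ ((r - 1) + 1)
        + MvPolynomial.X (Sum.inr (r - 1)) := by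
    rw [inclMap, MvPolynomial.aeval_X]
  have hxi : ∀ i : Fin m, inclMap m (MvPolynomial.X (Sum.inl i) ^ r)
      = MvPolynomial.X (Sum.inl (Fin.castSucc i)) ^ r := by
    intro i
    rw [map_pow, inclMap, MvPolynomial.aeval_X]
  rw [Finset.sum_congr rfl (fun i _ => hxi i), hx,
    Fin.sum_univ_castSucc (f := fun i : Fin (m + 1) =>
      (MvPolynomial.X (Sum.inl i) : Rm (m + 1)) ^ r),
    show r - 1 + 1 = r from by omega]
  ring

lemma incl_pPow {m : ℕ} (l : List ℕ) (hl : ∀ x ∈ l, 0 < x) :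
    inclMap m (pPow m l) = pPow (m + 1) l := by
  induction l with
  | nil => simp [pPow]
  | cons x xs ih =>
    have h1 : pPow m (x :: xs) = psumR m x * pPow m xs := by simp [pPow]
    have h2 : pPow (m + 1) (x :: xs) = psumR (m + 1) x * pPow (m + 1) xs := by simp [pPow]
    rw [h1, h2, map_mul, incl_psumR (hl x (List.mem_cons_self)),
      ih (fun y hy => hl y (List.mem_cons_of_mem _ hy))]

lemma restr_psumR {m r : ℕ} (hr : 0 < r) : restrMap m (psumR (m + 1) r) = psumR m r := by
  rw [psumR, psumR, map_add, map_sum]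
  have hx : restrMap m (MvPolynomial.X (Sum.inr (r - 1)))
      = MvPolynomial.X (Sum.inr (r - 1)) := by
    rw [restrMap, MvPolynomial.aeval_X]
  have hxi : ∀ i : Fin (m + 1), restrMap m (MvPolynomial.X (Sum.inl i) ^ r)
      = (if h : (i : ℕ) < m then
          (MvPolynomial.X (Sum.inl (⟨(i : ℕ), h⟩ : Fin m)) : Rm m) else 0) ^ r := by
    intro i
    rw [map_pow, restrMap, MvPolynomial.aeval_X]
  rw [Finset.sum_congr rfl (fun i _ => hxi i), hx,
    Fin.sum_univ_castSucc (f := fun i : Fin (m + 1) =>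
      (if h : (i : ℕ) < m then
        (MvPolynomial.X (Sum.inl (⟨(i : ℕ), h⟩ : Fin m)) : Rm m) else 0) ^ r)]
  rw [dif_neg (by simp), zero_pow (by omega), add_zero]
  refine congrArg₂ (· + ·) ?_ rfl
  apply Finset.sum_congr rfl
  intro i _
  rw [dif_pos (show ((Fin.castSucc i : Fin (m + 1)) : ℕ) < m from i.isLt)]
  exact congrArg (· ^ r) (congrArg MvPolynomial.X (congrArg Sum.inl (Fin.ext rfl)))

lemma restr_pPow {m : ℕ} (l : List ℕ) (hl : ∀ x ∈ l, 0 < x) :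
    restrMap m (pPow (m + 1) l) = pPow m l := by
  induction l with
  | nil => simp [pPow]
  | cons x xs ih =>
    have h1 : pPow m (x :: xs) = psumR m x * pPow m xs := by simp [pPow]
    have h2 : pPow (m + 1) (x :: xs) = psumR (m + 1) x * pPow (m + 1) xs := by simp [pPow]
    rw [h1, h2, map_mul, restr_psumR (hl x (List.mem_cons_self)),
      ih (fun y hy => hl y (List.mem_cons_of_mem _ hy))]

lemma incl_pLam {m : ℕ} {Tm : ℕ → Pol m → Pol m} {H : (Fin m → ℕ) → Pol m}
    {Tm' : ℕ → Pol (m + 1) → Pol (m + 1)} {H' : (Fin (m + 1) → ℕ) → Pol (m + 1)}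
    (hTm : HeckeSpec tq Tm) (hH : HLSpec Tm H)
    (hTm' : HeckeSpec tq Tm') (hH' : HLSpec Tm' H') (Λ : MPart m) :
    inclMap m (pLam H Λ) = pLam H' (snocPart Λ) := by
  rw [pLam, map_mul, incl_rename_inl, incl_pPow Λ.lam Λ.pos,
    rename_H_snoc hTm hH hTm' hH' Λ.a]
  rfl

lemma restr_pLam {m : ℕ} {Tm : ℕ → Pol m → Pol m} {H : (Fin m → ℕ) → Pol m}
    {Tm' : ℕ → Pol (m + 1) → Pol (m + 1)} {H' : (Fin (m + 1) → ℕ) → Pol (m + 1)}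
    (hTm : HeckeSpec tq Tm) (hH : HLSpec Tm H)
    (hTm' : HeckeSpec tq Tm') (hH' : HLSpec Tm' H') (Ω : MPart (m + 1)) :
    restrMap m (pLam H' Ω)
      = if Ω.a (Fin.last m) = 0 then pLam H (dropPart Ω) else 0 := by
  rw [pLam, map_mul, restr_rename_inl, restr_pPow Ω.lam Ω.pos]
  by_cases h0 : Ω.a (Fin.last m) = 0
  · rw [if_pos h0]
    have hsnoc : Ω.a = Fin.snoc (Ω.a ∘ Fin.castSucc) 0 := by
      funext k
      rcases Fin.eq_castSucc_or_eq_last k with ⟨k', rfl⟩ | rfl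
      · rw [Fin.snoc_castSucc]; rfl
      · rw [Fin.snoc_last]; exact h0
    rw [pLam]
    congr 1
    rw [show H' Ω.a = H' (Fin.snoc (Ω.a ∘ Fin.castSucc) 0) from by rw [← hsnoc],
      ← rename_H_snoc hTm hH hTm' hH' (Ω.a ∘ Fin.castSucc), psi_rename_castSucc]
    rfl
  · rw [if_neg h0]
    have hz : psiHom m (H' Ω.a) = 0 := by
      rw [psi_evalAt0_last,
        evalAt0_H_zero hTm' hH' Ω.a (Fin.last m) (by omega)
          (fun k hk => absurd (Fin.le_last k) (not_le.mpr hk)),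
        map_zero]
    rw [hz, map_zero, zero_mul]

end Aux6

/-- Proposition `propir`: adjointness of inclusion and restriction,
`⟨i(f), g⟩_{m+1} = ⟨f, r(g)⟩_m`. -/
theorem msym_inclusion_restriction_adjoint
    (m : ℕ)
    (Tm : ℕ → Pol m → Pol m) (hTm : HeckeSpec tq Tm)
    (H : (Fin m → ℕ) → Pol m) (hH : HLSpec Tm H)
    (sp : Rm m →ₗ[KK] Rm m →ₗ[KK] KK) (hsp : SPSpec qq tq H sp)
    (Tm' : ℕ → Pol (m + 1) → Pol (m + 1)) (hTm' : HeckeSpec tq Tm')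
    (H' : (Fin (m + 1) → ℕ) → Pol (m + 1)) (hH' : HLSpec Tm' H')
    (sp' : Rm (m + 1) →ₗ[KK] Rm (m + 1) →ₗ[KK] KK) (hsp' : SPSpec qq tq H' sp') :
    ∀ (f : Rm m) (g : Rm (m + 1)),
      sp' (inclMap m f) g = sp f (restrMap m g) := by
  have hsp1 : Submodule.span KK (Set.range (pLam H)) = ⊤ := by
    rw [eq_top_iff]
    intro x _
    exact span_pLam hTm hH hsp x
  have hsp2 : Submodule.span KK (Set.range (pLam H')) = ⊤ := by
    rw [eq_top_iff]
    intro x _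
    exact span_pLam hTm' hH' hsp' x
  have hcore : ∀ (Λ : MPart m) (Ω : MPart (m + 1)),
      sp' (inclMap m (pLam H Λ)) (pLam H' Ω) = sp (pLam H Λ) (restrMap m (pLam H' Ω)) := by
    intro Λ Ω
    rw [incl_pLam hTm hH hTm' hH' Λ, restr_pLam hTm hH hTm' hH' Ω, hsp' (snocPart Λ) Ω]
    by_cases h0 : Ω.a (Fin.last m) = 0
    · rw [if_pos h0, hsp Λ (dropPart Ω)]
      by_cases heq : snocPart Λ = Ω
      · rw [if_pos heq, if_pos ((snocPart_eq_iff h0).mp heq)]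
        have e1 : ∑ i, (snocPart Λ).a i = ∑ i, Λ.a i := sum_snoc Λ.a
        have e2 : invA (snocPart Λ).a = invA Λ.a := invA_snoc Λ.a
        rw [e1, e2]
        rfl
      · rw [if_neg heq, if_neg (fun hc => heq ((snocPart_eq_iff h0).mpr hc))]
    · rw [if_neg h0, map_zero]
      rw [if_neg (fun hc : snocPart Λ = Ω => h0 (by rw [← hc]; exact snocPart_last Λ))]
  have h1 : ∀ (Λ : MPart m) (g : Rm (m + 1)),
      sp' (inclMap m (pLam H Λ)) g = sp (pLam H Λ) (restrMap m g) := by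
    intro Λ
    have hext : (sp' (inclMap m (pLam H Λ)) : Rm (m + 1) →ₗ[KK] KK)
        = (sp (pLam H Λ)).comp (restrMap m).toLinearMap := by
      apply LinearMap.ext_on hsp2
      rintro x ⟨Ω, rfl⟩
      exact hcore Λ Ω
    intro g
    have := LinearMap.congr_fun hext g
    simpa using this
  intro f g
  have hext2 : ((LinearMap.applyₗ g).comp (sp'.comp (inclMap m).toLinearMap)
        : Rm m →ₗ[KK] KK)
      = (LinearMap.applyₗ (restrMap m g)).comp sp := by
    apply LinearMap.ext_on hsp1
    rintro x ⟨Λ, rfl⟩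
    simpa using h1 Λ g
  have := LinearMap.congr_fun hext2 f
  simpa using this

end MSym
end
end

section
/- Let N ≥ m and set K̄_m(x_{(N)},y_{(N)}) = K_0(x_{(N)},y_{(N)})·[∏_{i+j≤m}(1 − t·q^{−1}·x_i·y_j) / ∏_{i+j≤m+1}(1 − q^{−1}·x_i·y_j)]. Then for each i = 1,…,m−1, T_i^{(x)}·K̄_m(x_{(N)},y_{(N)}) = T_{m−i}^{(y)}·K̄_m(x_{(N)},y_{(N)}). -/
open scoped BigOperators Classical

noncomputable section

namespace MSym

/-- Power sum `p_r` in `N` variables. -/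
def psumN (N r : ℕ) : Pol N := ∑ i : Fin N, MvPolynomial.X i ^ r

/-- `p_λ` in `N` variables. -/
def pPowN (N : ℕ) (l : List ℕ) : Pol N := (l.map (psumN N)).prod

/-- `x`-embedding of `K[x_1,…,x_N]` into power series in `x_{(N)}, y_{(N)}`. -/
def embXN {N : ℕ} (p : Pol N) : MvPowerSeries (Fin N ⊕ Fin N) KK :=
  MvPolynomial.coeToMvPowerSeries.ringHom (MvPolynomial.rename (Sum.inl : Fin N → Fin N ⊕ Fin N) p)

/-- `y`-embedding of `K[y_1,…,y_N]` into power series in `x_{(N)}, y_{(N)}`. -/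
def embYN {N : ℕ} (p : Pol N) : MvPowerSeries (Fin N ⊕ Fin N) KK :=
  MvPolynomial.coeToMvPowerSeries.ringHom (MvPolynomial.rename (Sum.inr : Fin N → Fin N ⊕ Fin N) p)

/-- The kernel `K_0(x_{(N)}, y_{(N)})`. -/
def K0NN (N : ℕ) : MvPowerSeries (Fin N ⊕ Fin N) KK :=
  fsum fun l : PartL => (zQT qq tq l.1)⁻¹ • (embXN (pPowN N l.1) * embYN (pPowN N l.1))

/-- The defining property of
`G = ∏_{i+j≤m}(1-t q⁻¹ x_i y_j)/∏_{i+j≤m+1}(1-q⁻¹ x_i y_j)` in `N + N` variables. -/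
def GSpecN (m N : ℕ) (G : MvPowerSeries (Fin N ⊕ Fin N) KK) : Prop :=
  (∏ p ∈ (Finset.univ : Finset (Fin N × Fin N)).filter
      (fun p => (p.1 : ℕ) + (p.2 : ℕ) + 2 ≤ m + 1),
        (1 - qq⁻¹ • (MvPowerSeries.X (Sum.inl p.1 : Fin N ⊕ Fin N) * MvPowerSeries.X (Sum.inr p.2)))) *
      G =
    ∏ p ∈ (Finset.univ : Finset (Fin N × Fin N)).filter
      (fun p => (p.1 : ℕ) + (p.2 : ℕ) + 2 ≤ m),
        (1 - (tq * qq⁻¹) • (MvPowerSeries.X (Sum.inl p.1 : Fin N ⊕ Fin N) * MvPowerSeries.X (Sum.inr p.2)))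

/-! ### Auxiliary lemmas for the proof of `msym_kernel_hecke_symmetry` -/

section SwapAux

variable {V : Type*}

private lemma coeff_pswap [inst : DecidableEq V] (u v : V) (f : MvPowerSeries V KK) (d : V →₀ ℕ) :
    MvPowerSeries.coeff d (pswap u v f) =
      MvPowerSeries.coeff (Finsupp.equivMapDomain (Equiv.swap u v) d) f := by
  have hinst : inst = (fun a b => Classical.propDecidable (a = b)) :=
    funext fun a => funext fun b => Subsingleton.elim _ _
  rw [hinst]
  rfl

private lemma emapd_invol [DecidableEq V] (u v : V) (d : V →₀ ℕ) :
    Finsupp.equivMapDomain (Equiv.swap u v)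
      (Finsupp.equivMapDomain (Equiv.swap u v) d) = d := by
  rw [← Finsupp.equivMapDomain_trans, Equiv.swap_swap, Finsupp.equivMapDomain_refl]

private lemma emapd_add [DecidableEq V] (u v : V) (d e : V →₀ ℕ) :
    Finsupp.equivMapDomain (Equiv.swap u v) (d + e) =
      Finsupp.equivMapDomain (Equiv.swap u v) d +
        Finsupp.equivMapDomain (Equiv.swap u v) e := by
  simp only [Finsupp.equivMapDomain_eq_mapDomain]
  exact Finsupp.mapDomain_add

private lemma pswap_one (u v : V) : pswap u v (1 : MvPowerSeries V KK) = 1 := by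
  classical
  ext d
  rw [coeff_pswap, MvPowerSeries.coeff_one, MvPowerSeries.coeff_one]
  by_cases hd : d = 0
  · simp [hd]
  · rw [if_neg hd, if_neg fun h => hd (by rw [← emapd_invol u v d, h, Finsupp.equivMapDomain_zero])]

private lemma pswap_mul (u v : V) (f g : MvPowerSeries V KK) :
    pswap u v (f * g) = pswap u v f * pswap u v g := by
  classical
  ext d
  rw [coeff_pswap, MvPowerSeries.coeff_mul, MvPowerSeries.coeff_mul]
  refine Finset.sum_nbij'
    (fun p => (Finsupp.equivMapDomain (Equiv.swap u v) p.1,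
               Finsupp.equivMapDomain (Equiv.swap u v) p.2))
    (fun p => (Finsupp.equivMapDomain (Equiv.swap u v) p.1,
               Finsupp.equivMapDomain (Equiv.swap u v) p.2)) ?_ ?_ ?_ ?_ ?_
  · intro p hp
    rw [Finset.HasAntidiagonal.mem_antidiagonal] at hp ⊢
    rw [← emapd_add, hp, emapd_invol]
  · intro p hp
    rw [Finset.HasAntidiagonal.mem_antidiagonal] at hp ⊢
    rw [← emapd_add, hp]
  · intro p _; simp [emapd_invol]
  · intro p _; simp [emapd_invol]
  · intro p _
    rw [coeff_pswap, coeff_pswap, emapd_invol, emapd_invol]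

private def pswapMH (u v : V) : MvPowerSeries V KK →* MvPowerSeries V KK where
  toFun := pswap u v
  map_one' := pswap_one u v
  map_mul' := pswap_mul u v

private lemma pswap_smul (u v : V) (c : KK) (f : MvPowerSeries V KK) :
    pswap u v (c • f) = c • pswap u v f := by
  ext d
  rw [coeff_pswap, MvPowerSeries.coeff_smul, MvPowerSeries.coeff_smul, coeff_pswap]

private lemma pswap_coe [DecidableEq V] (u v : V) (P : MvPolynomial V KK) :
    pswap u v (MvPolynomial.coeToMvPowerSeries.ringHom P) =
      MvPolynomial.coeToMvPowerSeries.ringHom (MvPolynomial.rename (Equiv.swap u v) P) := by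
  classical
  ext d
  rw [MvPolynomial.coeToMvPowerSeries.ringHom_apply, MvPolynomial.coeToMvPowerSeries.ringHom_apply,
    coeff_pswap, MvPolynomial.coeff_coe, MvPolynomial.coeff_coe]
  have h1 : Finsupp.mapDomain (⇑(Equiv.swap u v))
      (Finsupp.equivMapDomain (Equiv.swap u v) d) = d := by
    rw [← Finsupp.equivMapDomain_eq_mapDomain, emapd_invol]
  conv_rhs => rw [← h1, MvPolynomial.coeff_rename_mapDomain _ (Equiv.injective _)]

end SwapAux

section KernelAux

variable {N : ℕ}

private lemma rename_psumN (e : Equiv.Perm (Fin N)) (r : ℕ) :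
    MvPolynomial.rename e (psumN N r) = psumN N r := by
  unfold psumN
  rw [map_sum]
  simp only [map_pow, MvPolynomial.rename_X]
  exact Equiv.sum_comp e fun k => MvPolynomial.X k ^ r

private lemma rename_pPowN (e : Equiv.Perm (Fin N)) (l : List ℕ) :
    MvPolynomial.rename e (pPowN N l) = pPowN N l := by
  unfold pPowN
  have hfun : ⇑(MvPolynomial.rename (R := KK) (⇑e : Fin N → Fin N)) ∘ psumN N = psumN N :=
    funext fun r => rename_psumN e r
  rw [map_list_prod, List.map_map, hfun]

private lemma swap_comp_inj {α β : Type*} [DecidableEq α] [DecidableEq β] {f : α → β}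
    (hf : Function.Injective f) (a b : α) :
    ⇑(Equiv.swap (f a) (f b)) ∘ f = f ∘ ⇑(Equiv.swap a b) :=
  funext fun c => Function.Injective.swap_apply hf a b c

private lemma swap_comp_ne {β : Type*} [DecidableEq β] (u v : β) {α : Type*} (g : α → β)
    (h1 : ∀ c, g c ≠ u) (h2 : ∀ c, g c ≠ v) : ⇑(Equiv.swap u v) ∘ g = g :=
  funext fun c => Equiv.swap_apply_of_ne_of_ne (h1 c) (h2 c)

private lemma pswap_embXN_inl (a b : Fin N) (P : Pol N) :
    pswap (Sum.inl a : Fin N ⊕ Fin N) (Sum.inl b) (embXN P) =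
      embXN (MvPolynomial.rename (Equiv.swap a b) P) := by
  unfold embXN
  rw [pswap_coe, MvPolynomial.rename_rename, MvPolynomial.rename_rename,
    swap_comp_inj Sum.inl_injective a b]

private lemma pswap_embYN_inl (a b : Fin N) (P : Pol N) :
    pswap (Sum.inl a : Fin N ⊕ Fin N) (Sum.inl b) (embYN P) = embYN P := by
  unfold embYN
  rw [pswap_coe, MvPolynomial.rename_rename,
    swap_comp_ne _ _ _ (fun c => by simp) (fun c => by simp)]

private lemma pswap_embYN_inr (a b : Fin N) (P : Pol N) :
    pswap (Sum.inr a : Fin N ⊕ Fin N) (Sum.inr b) (embYN P) =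
      embYN (MvPolynomial.rename (Equiv.swap a b) P) := by
  unfold embYN
  rw [pswap_coe, MvPolynomial.rename_rename, MvPolynomial.rename_rename,
    swap_comp_inj Sum.inr_injective a b]

private lemma pswap_embXN_inr (a b : Fin N) (P : Pol N) :
    pswap (Sum.inr a : Fin N ⊕ Fin N) (Sum.inr b) (embXN P) = embXN P := by
  unfold embXN
  rw [pswap_coe, MvPolynomial.rename_rename,
    swap_comp_ne _ _ _ (fun c => by simp) (fun c => by simp)]

private lemma pswap_fsum {ι : Type*} (u v : Fin N ⊕ Fin N) (f : ι → MvPowerSeries (Fin N ⊕ Fin N) KK) :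
    pswap u v (fsum f) = fsum fun i => pswap u v (f i) := rfl

private lemma pswap_K0_inl (a b : Fin N) :
    pswap (Sum.inl a : Fin N ⊕ Fin N) (Sum.inl b) (K0NN N) = K0NN N := by
  unfold K0NN
  rw [pswap_fsum]
  exact congrArg fsum (funext fun l => by
    rw [pswap_smul, pswap_mul, pswap_embXN_inl, pswap_embYN_inl, rename_pPowN])

private lemma pswap_K0_inr (a b : Fin N) :
    pswap (Sum.inr a : Fin N ⊕ Fin N) (Sum.inr b) (K0NN N) = K0NN N := by
  unfold K0NN
  rw [pswap_fsum]
  exact congrArg fsum (funext fun l => by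
    rw [pswap_smul, pswap_mul, pswap_embXN_inr, pswap_embYN_inr, rename_pPowN])

end KernelAux

section ProdSwapAux

private lemma prod_swap_pair {α : Type*} [DecidableEq α] {M : Type*} [CommMonoid M]
    (S : Finset α) (σ : α → α) (hinv : ∀ p, σ (σ p) = p) (a : α) (ha : a ∈ S) (hb : σ a ∉ S)
    (hfix : ∀ p ∈ S, p ≠ a → σ p ∈ S ∧ σ p ≠ a) (f : α → M) :
    f a * ∏ p ∈ S, f (σ p) = f (σ a) * ∏ p ∈ S, f p := by
  rw [← Finset.mul_prod_erase S (fun p => f (σ p)) ha, ← Finset.mul_prod_erase S f ha]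
  have h : ∏ p ∈ S.erase a, f (σ p) = ∏ p ∈ S.erase a, f p := by
    refine Finset.prod_nbij' σ σ ?_ ?_ ?_ ?_ ?_
    · intro p hp
      rcases Finset.mem_erase.mp hp with ⟨hpa, hpS⟩
      rcases hfix p hpS hpa with ⟨h1, h2⟩
      exact Finset.mem_erase.mpr ⟨h2, h1⟩
    · intro p hp
      rcases Finset.mem_erase.mp hp with ⟨hpa, hpS⟩
      rcases hfix p hpS hpa with ⟨h1, h2⟩
      exact Finset.mem_erase.mpr ⟨h2, h1⟩
    · intro p _; exact hinv p
    · intro p _; exact hinv p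
    · intro p _; rfl
  rw [h, mul_left_comm]

variable {N : ℕ}

private def trm (s : KK) (p : Fin N × Fin N) : MvPowerSeries (Fin N ⊕ Fin N) KK :=
  1 - s • (MvPowerSeries.X (Sum.inl p.1 : Fin N ⊕ Fin N) * MvPowerSeries.X (Sum.inr p.2))

private lemma pswapX {V' : Type*} [DecidableEq V'] (u v w : V') :
    pswap u v (MvPowerSeries.X w : MvPowerSeries V' KK) = MvPowerSeries.X (Equiv.swap u v w) := by
  classical
  ext d
  rw [coeff_pswap, MvPowerSeries.coeff_X, MvPowerSeries.coeff_X]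
  by_cases hd : d = Finsupp.single (Equiv.swap u v w) 1
  · rw [if_pos hd, if_pos]
    rw [hd, Finsupp.equivMapDomain_single]
    simp [Equiv.swap_apply_self]
  · rw [if_neg hd, if_neg]
    intro h
    exact hd (by rw [← emapd_invol u v d, h, Finsupp.equivMapDomain_single])

private lemma pswap_sub {V' : Type*} (u v : V') (f g : MvPowerSeries V' KK) :
    pswap u v (f - g) = pswap u v f - pswap u v g := by
  ext d
  rw [coeff_pswap, map_sub, map_sub, coeff_pswap, coeff_pswap]

private lemma pswap_trm_x (s : KK) (a b : Fin N) (p : Fin N × Fin N) :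
    pswap (Sum.inl a : Fin N ⊕ Fin N) (Sum.inl b) (trm s p) =
      trm s (Equiv.swap a b p.1, p.2) := by
  unfold trm
  rw [pswap_sub, pswap_one, pswap_smul, pswap_mul, pswapX, pswapX]
  rw [show (Equiv.swap (Sum.inl a : Fin N ⊕ Fin N) (Sum.inl b)) (Sum.inl p.1)
      = Sum.inl (Equiv.swap a b p.1) from
    Function.Injective.swap_apply Sum.inl_injective a b p.1]
  rw [show (Equiv.swap (Sum.inl a : Fin N ⊕ Fin N) (Sum.inl b)) (Sum.inr p.2)
      = Sum.inr p.2 from Equiv.swap_apply_of_ne_of_ne (by simp) (by simp)]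

private lemma pswap_trm_y (s : KK) (a b : Fin N) (p : Fin N × Fin N) :
    pswap (Sum.inr a : Fin N ⊕ Fin N) (Sum.inr b) (trm s p) =
      trm s (p.1, Equiv.swap a b p.2) := by
  unfold trm
  rw [pswap_sub, pswap_one, pswap_smul, pswap_mul, pswapX, pswapX]
  rw [show (Equiv.swap (Sum.inr a : Fin N ⊕ Fin N) (Sum.inr b)) (Sum.inr p.2)
      = Sum.inr (Equiv.swap a b p.2) from
    Function.Injective.swap_apply Sum.inr_injective a b p.2]
  rw [show (Equiv.swap (Sum.inr a : Fin N ⊕ Fin N) (Sum.inr b)) (Sum.inl p.1)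
      = Sum.inl p.1 from Equiv.swap_apply_of_ne_of_ne (by simp) (by simp)]

private lemma pswap_prod_x (s : KK) (c i j : ℕ) (hi : i + 1 < N) (hj : j < N)
    (hc : i + j + 2 = c) :
    trm s (⟨i, Nat.lt_of_succ_lt hi⟩, ⟨j, hj⟩) *
      pswap (Sum.inl (⟨i, Nat.lt_of_succ_lt hi⟩ : Fin N) : Fin N ⊕ Fin N)
        (Sum.inl (⟨i + 1, hi⟩ : Fin N))
        (∏ p ∈ (Finset.univ : Finset (Fin N × Fin N)).filter
            (fun p => (p.1 : ℕ) + (p.2 : ℕ) + 2 ≤ c), trm s p) =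
    trm s (⟨i + 1, hi⟩, ⟨j, hj⟩) *
      ∏ p ∈ (Finset.univ : Finset (Fin N × Fin N)).filter
          (fun p => (p.1 : ℕ) + (p.2 : ℕ) + 2 ≤ c), trm s p := by
  classical
  have hmap : pswap (Sum.inl (⟨i, Nat.lt_of_succ_lt hi⟩ : Fin N) : Fin N ⊕ Fin N)
        (Sum.inl (⟨i + 1, hi⟩ : Fin N))
        (∏ p ∈ (Finset.univ : Finset (Fin N × Fin N)).filter
            (fun p => (p.1 : ℕ) + (p.2 : ℕ) + 2 ≤ c), trm s p) =
      ∏ p ∈ (Finset.univ : Finset (Fin N × Fin N)).filter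
          (fun p => (p.1 : ℕ) + (p.2 : ℕ) + 2 ≤ c),
        trm s ((fun q : Fin N × Fin N =>
          (Equiv.swap (⟨i, Nat.lt_of_succ_lt hi⟩ : Fin N) ⟨i + 1, hi⟩ q.1, q.2)) p) := by
    rw [show pswap (Sum.inl (⟨i, Nat.lt_of_succ_lt hi⟩ : Fin N) : Fin N ⊕ Fin N)
        (Sum.inl (⟨i + 1, hi⟩ : Fin N))
        (∏ p ∈ (Finset.univ : Finset (Fin N × Fin N)).filter
            (fun p => (p.1 : ℕ) + (p.2 : ℕ) + 2 ≤ c), trm s p)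
      = pswapMH (Sum.inl (⟨i, Nat.lt_of_succ_lt hi⟩ : Fin N) : Fin N ⊕ Fin N)
        (Sum.inl (⟨i + 1, hi⟩ : Fin N))
        (∏ p ∈ (Finset.univ : Finset (Fin N × Fin N)).filter
            (fun p => (p.1 : ℕ) + (p.2 : ℕ) + 2 ≤ c), trm s p) from rfl, map_prod]
    exact Finset.prod_congr rfl fun p _ => pswap_trm_x s _ _ p
  rw [hmap]
  have key := prod_swap_pair
    ((Finset.univ : Finset (Fin N × Fin N)).filter
      (fun p => (p.1 : ℕ) + (p.2 : ℕ) + 2 ≤ c))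
    (fun q : Fin N × Fin N =>
      (Equiv.swap (⟨i, Nat.lt_of_succ_lt hi⟩ : Fin N) ⟨i + 1, hi⟩ q.1, q.2))
    (fun p => by simp [Equiv.swap_apply_self])
    ((⟨i, Nat.lt_of_succ_lt hi⟩ : Fin N), (⟨j, hj⟩ : Fin N))
    (Finset.mem_filter.mpr ⟨Finset.mem_univ _, by simpa using le_of_eq hc⟩)
    (by
      intro hmem
      have h' := (Finset.mem_filter.mp hmem).2
      simp only [Equiv.swap_apply_left] at h'
      exact absurd (show i + 1 + j + 2 ≤ c from h') (by omega))
    ?_ (trm s)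
  · refine key.trans ?_
    simp only [Equiv.swap_apply_left]
  · intro p hp hpa
    have hpc : (p.1 : ℕ) + (p.2 : ℕ) + 2 ≤ c := (Finset.mem_filter.mp hp).2
    by_cases h1 : p.1 = (⟨i, Nat.lt_of_succ_lt hi⟩ : Fin N)
    · have hne : (p.2 : ℕ) ≠ j := fun hvj =>
        hpa (Prod.ext_iff.mpr ⟨h1, Fin.ext hvj⟩)
      have hval : (i : ℕ) + (p.2 : ℕ) + 2 ≤ c := by
        rw [h1] at hpc; simpa using hpc
      have h2 : (p.2 : ℕ) < j := by omega
      constructor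
      · refine Finset.mem_filter.mpr ⟨Finset.mem_univ _, ?_⟩
        simp only [h1, Equiv.swap_apply_left]
        show (i + 1 : ℕ) + (p.2 : ℕ) + 2 ≤ c
        omega
      · intro hcon
        have h3 : Equiv.swap (⟨i, Nat.lt_of_succ_lt hi⟩ : Fin N) ⟨i + 1, hi⟩ p.1
            = (⟨i, Nat.lt_of_succ_lt hi⟩ : Fin N) := congrArg Prod.fst hcon
        rw [h1, Equiv.swap_apply_left] at h3
        have h4 : i + 1 = i := congrArg Fin.val h3
        omega
    · by_cases h2 : p.1 = (⟨i + 1, hi⟩ : Fin N)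
      · have hval : (i + 1 : ℕ) + (p.2 : ℕ) + 2 ≤ c := by
          rw [h2] at hpc; simpa using hpc
        constructor
        · refine Finset.mem_filter.mpr ⟨Finset.mem_univ _, ?_⟩
          simp only [h2, Equiv.swap_apply_right]
          show (i : ℕ) + (p.2 : ℕ) + 2 ≤ c
          omega
        · intro hcon
          have h3 : (p.2 : ℕ) = j := congrArg Fin.val (congrArg Prod.snd hcon)
          omega
      · constructor
        · refine Finset.mem_filter.mpr ⟨Finset.mem_univ _, ?_⟩
          simpa [Equiv.swap_apply_of_ne_of_ne h1 h2] using hpc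
        · intro hcon
          apply hpa
          rw [show (Equiv.swap (⟨i, Nat.lt_of_succ_lt hi⟩ : Fin N) ⟨i + 1, hi⟩ p.1, p.2)
            = p from by simp [Equiv.swap_apply_of_ne_of_ne h1 h2]] at hcon
          exact hcon

private lemma pswap_prod_y (s : KK) (c r j : ℕ) (hj : j + 1 < N) (hr : r < N)
    (hc : r + j + 2 = c) :
    trm s (⟨r, hr⟩, ⟨j, Nat.lt_of_succ_lt hj⟩) *
      pswap (Sum.inr (⟨j, Nat.lt_of_succ_lt hj⟩ : Fin N) : Fin N ⊕ Fin N)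
        (Sum.inr (⟨j + 1, hj⟩ : Fin N))
        (∏ p ∈ (Finset.univ : Finset (Fin N × Fin N)).filter
            (fun p => (p.1 : ℕ) + (p.2 : ℕ) + 2 ≤ c), trm s p) =
    trm s (⟨r, hr⟩, ⟨j + 1, hj⟩) *
      ∏ p ∈ (Finset.univ : Finset (Fin N × Fin N)).filter
          (fun p => (p.1 : ℕ) + (p.2 : ℕ) + 2 ≤ c), trm s p := by
  classical
  have hmap : pswap (Sum.inr (⟨j, Nat.lt_of_succ_lt hj⟩ : Fin N) : Fin N ⊕ Fin N)
        (Sum.inr (⟨j + 1, hj⟩ : Fin N))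
        (∏ p ∈ (Finset.univ : Finset (Fin N × Fin N)).filter
            (fun p => (p.1 : ℕ) + (p.2 : ℕ) + 2 ≤ c), trm s p) =
      ∏ p ∈ (Finset.univ : Finset (Fin N × Fin N)).filter
          (fun p => (p.1 : ℕ) + (p.2 : ℕ) + 2 ≤ c),
        trm s ((fun q : Fin N × Fin N =>
          (q.1, Equiv.swap (⟨j, Nat.lt_of_succ_lt hj⟩ : Fin N) ⟨j + 1, hj⟩ q.2)) p) := by
    rw [show pswap (Sum.inr (⟨j, Nat.lt_of_succ_lt hj⟩ : Fin N) : Fin N ⊕ Fin N)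
        (Sum.inr (⟨j + 1, hj⟩ : Fin N))
        (∏ p ∈ (Finset.univ : Finset (Fin N × Fin N)).filter
            (fun p => (p.1 : ℕ) + (p.2 : ℕ) + 2 ≤ c), trm s p)
      = pswapMH (Sum.inr (⟨j, Nat.lt_of_succ_lt hj⟩ : Fin N) : Fin N ⊕ Fin N)
        (Sum.inr (⟨j + 1, hj⟩ : Fin N))
        (∏ p ∈ (Finset.univ : Finset (Fin N × Fin N)).filter
            (fun p => (p.1 : ℕ) + (p.2 : ℕ) + 2 ≤ c), trm s p) from rfl, map_prod]
    exact Finset.prod_congr rfl fun p _ => pswap_trm_y s _ _ p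
  rw [hmap]
  have key := prod_swap_pair
    ((Finset.univ : Finset (Fin N × Fin N)).filter
      (fun p => (p.1 : ℕ) + (p.2 : ℕ) + 2 ≤ c))
    (fun q : Fin N × Fin N =>
      (q.1, Equiv.swap (⟨j, Nat.lt_of_succ_lt hj⟩ : Fin N) ⟨j + 1, hj⟩ q.2))
    (fun p => by simp [Equiv.swap_apply_self])
    ((⟨r, hr⟩ : Fin N), (⟨j, Nat.lt_of_succ_lt hj⟩ : Fin N))
    (Finset.mem_filter.mpr ⟨Finset.mem_univ _, by simpa using le_of_eq hc⟩)
    (by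
      intro hmem
      have h' := (Finset.mem_filter.mp hmem).2
      simp only [Equiv.swap_apply_left] at h'
      exact absurd (show r + (j + 1) + 2 ≤ c from h') (by omega))
    ?_ (trm s)
  · refine key.trans ?_
    simp only [Equiv.swap_apply_left]
  · intro p hp hpa
    have hpc : (p.1 : ℕ) + (p.2 : ℕ) + 2 ≤ c := (Finset.mem_filter.mp hp).2
    by_cases h1 : p.2 = (⟨j, Nat.lt_of_succ_lt hj⟩ : Fin N)
    · have hne : (p.1 : ℕ) ≠ r := fun hvj =>
        hpa (Prod.ext_iff.mpr ⟨Fin.ext hvj, h1⟩)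
      have hval : (p.1 : ℕ) + (j : ℕ) + 2 ≤ c := by
        rw [h1] at hpc; simpa using hpc
      have h2 : (p.1 : ℕ) < r := by omega
      constructor
      · refine Finset.mem_filter.mpr ⟨Finset.mem_univ _, ?_⟩
        simp only [h1, Equiv.swap_apply_left]
        show (p.1 : ℕ) + (j + 1 : ℕ) + 2 ≤ c
        omega
      · intro hcon
        have h3 : (p.1 : ℕ) = r := congrArg Fin.val (congrArg Prod.fst hcon)
        omega
    · by_cases h2 : p.2 = (⟨j + 1, hj⟩ : Fin N)
      · have hval : (p.1 : ℕ) + (j + 1 : ℕ) + 2 ≤ c := by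
          rw [h2] at hpc; simpa using hpc
        constructor
        · refine Finset.mem_filter.mpr ⟨Finset.mem_univ _, ?_⟩
          simp only [h2, Equiv.swap_apply_right]
          show (p.1 : ℕ) + (j : ℕ) + 2 ≤ c
          omega
        · intro hcon
          have h3 : (p.1 : ℕ) = r := congrArg Fin.val (congrArg Prod.fst hcon)
          omega
      · constructor
        · refine Finset.mem_filter.mpr ⟨Finset.mem_univ _, ?_⟩
          simpa [Equiv.swap_apply_of_ne_of_ne h1 h2] using hpc
        · intro hcon
          apply hpa
          rw [show (p.1, Equiv.swap (⟨j, Nat.lt_of_succ_lt hj⟩ : Fin N) ⟨j + 1, hj⟩ p.2)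
            = p from by simp [Equiv.swap_apply_of_ne_of_ne h1 h2]] at hcon
          exact hcon

private lemma pswapE_eq {V' : Type*} {N' : ℕ} (emb : Fin N' → V') (i : ℕ) (h : i + 1 < N')
    (f : MvPowerSeries V' KK) :
    pswapE emb i f = pswap (emb ⟨i, Nat.lt_of_succ_lt h⟩) (emb ⟨i + 1, h⟩) f := by
  unfold pswapE
  rw [dif_pos h]

private lemma xPS_eq {V' : Type*} {N' : ℕ} (emb : Fin N' → V') (i : ℕ) (h : i < N') :
    (xPS emb i : MvPowerSeries V' KK) = MvPowerSeries.X (emb ⟨i, h⟩) := by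
  unfold xPS
  rw [dif_pos h]

private lemma one_sub_ne_zero {V' : Type*} (f : MvPowerSeries V' KK)
    (hf : MvPowerSeries.constantCoeff f = 0) : (1 : MvPowerSeries V' KK) - f ≠ 0 := by
  intro h
  have h2 := congrArg (MvPowerSeries.constantCoeff) h
  rw [map_sub, map_one, hf, map_zero] at h2
  simp at h2

private lemma X_sub_X_ne_zero_s19 {V' : Type*} (u v : V') (h : u ≠ v) :
    (MvPowerSeries.X u - MvPowerSeries.X v : MvPowerSeries V' KK) ≠ 0 := by
  classical
  intro h0
  have h1 := congrArg (MvPowerSeries.coeff (Finsupp.single u 1)) h0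
  rw [map_sub, MvPowerSeries.coeff_index_single_self_X, MvPowerSeries.coeff_X,
    if_neg (fun hs => h (Finsupp.single_left_injective one_ne_zero hs)), map_zero] at h1
  simp at h1

end ProdSwapAux

/-- Lemma `lema Ti`: for `K̄_m = K_0(x_{(N)},y_{(N)}) G` one has
`T_i^{(x)} K̄_m = T_{m-i}^{(y)} K̄_m` for `i = 1,…,m-1` (0-indexed: `T_i^{(x)}` and
`T_{m-i-2}^{(y)}`). -/
theorem msym_kernel_hecke_symmetry
    (m N : ℕ) (hm : m ≤ N)
    (TAx : ℕ → MvPowerSeries (Fin N ⊕ Fin N) KK → MvPowerSeries (Fin N ⊕ Fin N) KK)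
    (hTAx : HeckeSpecPS tq (fun i : Fin N => (Sum.inl i : Fin N ⊕ Fin N)) TAx)
    (TAy : ℕ → MvPowerSeries (Fin N ⊕ Fin N) KK → MvPowerSeries (Fin N ⊕ Fin N) KK)
    (hTAy : HeckeSpecPS tq (fun i : Fin N => (Sum.inr i : Fin N ⊕ Fin N)) TAy)
    (G : MvPowerSeries (Fin N ⊕ Fin N) KK) (hG : GSpecN m N G) :
    ∀ i : ℕ, i + 1 < m →
      TAx i (K0NN N * G) = TAy (m - i - 2) (K0NN N * G) := by
  intro i hi
  classical
  have hiN : i + 1 < N := lt_of_lt_of_le hi hm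
  have hi0 : i < N := Nat.lt_of_succ_lt hiN
  set j : ℕ := m - i - 2 with hjdef
  have hjN : j + 1 < N := by omega
  have hj0 : j < N := by omega
  -- the specification of `G`, with products written via `trm`
  have hG0 : (∏ p ∈ (Finset.univ : Finset (Fin N × Fin N)).filter
        (fun p => (p.1 : ℕ) + (p.2 : ℕ) + 2 ≤ m + 1), trm qq⁻¹ p) * G =
      ∏ p ∈ (Finset.univ : Finset (Fin N × Fin N)).filter
        (fun p => (p.1 : ℕ) + (p.2 : ℕ) + 2 ≤ m), trm (tq * qq⁻¹) p := hG
  -- swapped versions of the specification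
  have hGx := congrArg (pswap (Sum.inl (⟨i, hi0⟩ : Fin N) : Fin N ⊕ Fin N)
    (Sum.inl (⟨i + 1, hiN⟩ : Fin N))) hG0
  rw [pswap_mul] at hGx
  have hGy := congrArg (pswap (Sum.inr (⟨j, hj0⟩ : Fin N) : Fin N ⊕ Fin N)
    (Sum.inr (⟨j + 1, hjN⟩ : Fin N))) hG0
  rw [pswap_mul] at hGy
  -- the four boundary product identities
  have hA := pswap_prod_x (N := N) qq⁻¹ (m + 1) i (j + 1) hiN hjN (by omega)
  have hB := pswap_prod_x (N := N) (tq * qq⁻¹) m i j hiN hj0 (by omega)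
  have hAy := pswap_prod_y (N := N) qq⁻¹ (m + 1) (i + 1) j hjN hiN (by omega)
  have hBy := pswap_prod_y (N := N) (tq * qq⁻¹) m i j hjN hi0 (by omega)
  -- the big product is nonzero
  have hAne : (∏ p ∈ (Finset.univ : Finset (Fin N × Fin N)).filter
      (fun p => (p.1 : ℕ) + (p.2 : ℕ) + 2 ≤ m + 1), trm (N := N) qq⁻¹ p) ≠ 0 := by
    intro h0
    have h1 : MvPowerSeries.constantCoeff
        (∏ p ∈ (Finset.univ : Finset (Fin N × Fin N)).filter
          (fun p => (p.1 : ℕ) + (p.2 : ℕ) + 2 ≤ m + 1), trm (N := N) qq⁻¹ p) = 1 := by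
      rw [map_prod]
      refine Finset.prod_eq_one fun p _ => ?_
      simp [trm, MvPowerSeries.smul_eq_C_mul]
    rw [h0] at h1
    simp at h1
  -- key identity, x side
  have kx0 : (∏ p ∈ (Finset.univ : Finset (Fin N × Fin N)).filter
        (fun p => (p.1 : ℕ) + (p.2 : ℕ) + 2 ≤ m + 1), trm (N := N) qq⁻¹ p) *
      (trm qq⁻¹ (⟨i + 1, hiN⟩, ⟨j + 1, hjN⟩) * (trm (tq * qq⁻¹) (⟨i, hi0⟩, ⟨j, hj0⟩) *
        pswap (Sum.inl (⟨i, hi0⟩ : Fin N) : Fin N ⊕ Fin N) (Sum.inl (⟨i + 1, hiN⟩ : Fin N)) G)) =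
      (∏ p ∈ (Finset.univ : Finset (Fin N × Fin N)).filter
        (fun p => (p.1 : ℕ) + (p.2 : ℕ) + 2 ≤ m + 1), trm (N := N) qq⁻¹ p) *
      (trm qq⁻¹ (⟨i, hi0⟩, ⟨j + 1, hjN⟩) * (trm (tq * qq⁻¹) (⟨i + 1, hiN⟩, ⟨j, hj0⟩) * G)) := by
    linear_combination
      (-(trm (N := N) (tq * qq⁻¹) (⟨i, hi0⟩, ⟨j, hj0⟩) *
        pswap (Sum.inl (⟨i, hi0⟩ : Fin N) : Fin N ⊕ Fin N)
          (Sum.inl (⟨i + 1, hiN⟩ : Fin N)) G)) * hA +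
      trm (N := N) qq⁻¹ (⟨i, hi0⟩, ⟨j + 1, hjN⟩) * hB +
      (trm (N := N) qq⁻¹ (⟨i, hi0⟩, ⟨j + 1, hjN⟩) *
        trm (N := N) (tq * qq⁻¹) (⟨i, hi0⟩, ⟨j, hj0⟩)) * hGx -
      (trm (N := N) qq⁻¹ (⟨i, hi0⟩, ⟨j + 1, hjN⟩) *
        trm (N := N) (tq * qq⁻¹) (⟨i + 1, hiN⟩, ⟨j, hj0⟩)) * hG0
  have kx' := mul_left_cancel₀ hAne kx0
  -- key identity, y side
  have ky0 : (∏ p ∈ (Finset.univ : Finset (Fin N × Fin N)).filter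
        (fun p => (p.1 : ℕ) + (p.2 : ℕ) + 2 ≤ m + 1), trm (N := N) qq⁻¹ p) *
      (trm qq⁻¹ (⟨i + 1, hiN⟩, ⟨j + 1, hjN⟩) * (trm (tq * qq⁻¹) (⟨i, hi0⟩, ⟨j, hj0⟩) *
        pswap (Sum.inr (⟨j, hj0⟩ : Fin N) : Fin N ⊕ Fin N) (Sum.inr (⟨j + 1, hjN⟩ : Fin N)) G)) =
      (∏ p ∈ (Finset.univ : Finset (Fin N × Fin N)).filter
        (fun p => (p.1 : ℕ) + (p.2 : ℕ) + 2 ≤ m + 1), trm (N := N) qq⁻¹ p) *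
      (trm qq⁻¹ (⟨i + 1, hiN⟩, ⟨j, hj0⟩) * (trm (tq * qq⁻¹) (⟨i, hi0⟩, ⟨j + 1, hjN⟩) * G)) := by
    linear_combination
      (-(trm (N := N) (tq * qq⁻¹) (⟨i, hi0⟩, ⟨j, hj0⟩) *
        pswap (Sum.inr (⟨j, hj0⟩ : Fin N) : Fin N ⊕ Fin N)
          (Sum.inr (⟨j + 1, hjN⟩ : Fin N)) G)) * hAy +
      trm (N := N) qq⁻¹ (⟨i + 1, hiN⟩, ⟨j, hj0⟩) * hBy +
      (trm (N := N) qq⁻¹ (⟨i + 1, hiN⟩, ⟨j, hj0⟩) *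
        trm (N := N) (tq * qq⁻¹) (⟨i, hi0⟩, ⟨j, hj0⟩)) * hGy -
      (trm (N := N) qq⁻¹ (⟨i + 1, hiN⟩, ⟨j, hj0⟩) *
        trm (N := N) (tq * qq⁻¹) (⟨i, hi0⟩, ⟨j + 1, hjN⟩)) * hG0
  have ky' := mul_left_cancel₀ hAne ky0
  -- the Hecke relations applied to the kernel
  have hx0 := hTAx i hiN (K0NN N * G)
  rw [xPS_eq _ i hi0, xPS_eq _ (i + 1) hiN, pswapE_eq _ i hiN] at hx0
  rw [pswap_mul, pswap_K0_inl] at hx0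
  have hy0 := hTAy j hjN (K0NN N * G)
  rw [xPS_eq _ j hj0, xPS_eq _ (j + 1) hjN, pswapE_eq _ j hjN] at hy0
  rw [pswap_mul, pswap_K0_inr] at hy0
  -- pass to `C`-multiplication form
  simp only [trm, MvPowerSeries.smul_eq_C_mul, map_mul] at kx' ky' hx0 hy0
  -- nonzero factors for cancellation
  have hcne : ((1 - MvPowerSeries.C qq⁻¹ *
        (MvPowerSeries.X (Sum.inl (⟨i + 1, hiN⟩ : Fin N) : Fin N ⊕ Fin N) *
          MvPowerSeries.X (Sum.inr (⟨j + 1, hjN⟩ : Fin N)))) *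
      (1 - MvPowerSeries.C tq * MvPowerSeries.C qq⁻¹ *
        (MvPowerSeries.X (Sum.inl (⟨i, hi0⟩ : Fin N) : Fin N ⊕ Fin N) *
          MvPowerSeries.X (Sum.inr (⟨j, hj0⟩ : Fin N))))) ≠ 0 :=
    mul_ne_zero (one_sub_ne_zero _ (by simp)) (one_sub_ne_zero _ (by simp))
  have hDx : (MvPowerSeries.X (Sum.inl (⟨i, hi0⟩ : Fin N) : Fin N ⊕ Fin N) -
      MvPowerSeries.X (Sum.inl (⟨i + 1, hiN⟩ : Fin N)) : MvPowerSeries (Fin N ⊕ Fin N) KK) ≠ 0 :=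
    X_sub_X_ne_zero_s19 _ _ (by
      intro hcontra
      simp only [Sum.inl.injEq, Fin.mk.injEq] at hcontra
      omega)
  have hDy : (MvPowerSeries.X (Sum.inr (⟨j, hj0⟩ : Fin N) : Fin N ⊕ Fin N) -
      MvPowerSeries.X (Sum.inr (⟨j + 1, hjN⟩ : Fin N)) : MvPowerSeries (Fin N ⊕ Fin N) KK) ≠ 0 :=
    X_sub_X_ne_zero_s19 _ _ (by
      intro hcontra
      simp only [Sum.inr.injEq, Fin.mk.injEq] at hcontra
      omega)
  refine mul_left_cancel₀ hcne (mul_left_cancel₀ hDy (mul_left_cancel₀ hDx ?_))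
  linear_combination
    ((MvPowerSeries.X (Sum.inr (⟨j, hj0⟩ : Fin N) : Fin N ⊕ Fin N) -
        MvPowerSeries.X (Sum.inr (⟨j + 1, hjN⟩ : Fin N))) *
      ((1 - MvPowerSeries.C qq⁻¹ *
        (MvPowerSeries.X (Sum.inl (⟨i + 1, hiN⟩ : Fin N) : Fin N ⊕ Fin N) *
          MvPowerSeries.X (Sum.inr (⟨j + 1, hjN⟩ : Fin N)))) *
      (1 - MvPowerSeries.C tq * MvPowerSeries.C qq⁻¹ *
        (MvPowerSeries.X (Sum.inl (⟨i, hi0⟩ : Fin N) : Fin N ⊕ Fin N) *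
          MvPowerSeries.X (Sum.inr (⟨j, hj0⟩ : Fin N)))))) * hx0 -
    ((MvPowerSeries.X (Sum.inl (⟨i, hi0⟩ : Fin N) : Fin N ⊕ Fin N) -
        MvPowerSeries.X (Sum.inl (⟨i + 1, hiN⟩ : Fin N))) *
      ((1 - MvPowerSeries.C qq⁻¹ *
        (MvPowerSeries.X (Sum.inl (⟨i + 1, hiN⟩ : Fin N) : Fin N ⊕ Fin N) *
          MvPowerSeries.X (Sum.inr (⟨j + 1, hjN⟩ : Fin N)))) *
      (1 - MvPowerSeries.C tq * MvPowerSeries.C qq⁻¹ *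
        (MvPowerSeries.X (Sum.inl (⟨i, hi0⟩ : Fin N) : Fin N ⊕ Fin N) *
          MvPowerSeries.X (Sum.inr (⟨j, hj0⟩ : Fin N)))))) * hy0 +
    (K0NN N * (MvPowerSeries.X (Sum.inr (⟨j, hj0⟩ : Fin N) : Fin N ⊕ Fin N) -
        MvPowerSeries.X (Sum.inr (⟨j + 1, hjN⟩ : Fin N))) *
      (MvPowerSeries.C tq *
        MvPowerSeries.X (Sum.inl (⟨i, hi0⟩ : Fin N) : Fin N ⊕ Fin N) -
        MvPowerSeries.X (Sum.inl (⟨i + 1, hiN⟩ : Fin N)))) * kx' -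
    (K0NN N * (MvPowerSeries.X (Sum.inl (⟨i, hi0⟩ : Fin N) : Fin N ⊕ Fin N) -
        MvPowerSeries.X (Sum.inl (⟨i + 1, hiN⟩ : Fin N))) *
      (MvPowerSeries.C tq *
        MvPowerSeries.X (Sum.inr (⟨j, hj0⟩ : Fin N) : Fin N ⊕ Fin N) -
        MvPowerSeries.X (Sum.inr (⟨j + 1, hjN⟩ : Fin N)))) * ky'

end MSym
end
end
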